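/- arXiv:0901.1175 — 2 statements merged into one kernel-verified Lean document; each statement's English description precedes it below -/
import Mathlib

section
/- For every positive integer n, the map π ↦ (π°, π̂) is a bijection from NCL(n) onto the set {(α, β) : α, β ∈ NC(n), α ≪ β}. -/
open scoped Classical

/-- The minimum of a finset of naturals (`0` if empty). -/
noncomputable def fmin (A : Finset ℕ) : ℕ := sInf (A : Set ℕ)

/-- The maximum of a finset of naturals (`0` if empty). -/
noncomputable def fmax (A : Finset ℕ) : ℕ := sSup (A : Set ℕ)

/-- `α` is a partition of the finite set `F ⊆ ℕ`. -/
def IsPartitionOfSet (F : Finset ℕ) (α : Finset (Finset ℕ)) : Prop :=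
  (∀ V ∈ α, V.Nonempty) ∧ (∀ V ∈ α, V ⊆ F) ∧ (∀ m ∈ F, ∃ V ∈ α, m ∈ V) ∧
    ∀ V ∈ α, ∀ W ∈ α, V ≠ W → V ∩ W = ∅

/-- `α` is a partition of `{1,…,n}`. -/
def IsPartitionOf (n : ℕ) (α : Finset (Finset ℕ)) : Prop :=
  IsPartitionOfSet (Finset.Icc 1 n) α

/-- Two distinct blocks of the family `π` cross: there are `a < b < c < d` with
`a, c` in one block and `b, d` in a different block. -/
def IsCrossing (π : Finset (Finset ℕ)) : Prop :=
  ∃ A ∈ π, ∃ B ∈ π, A ≠ B ∧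
    ∃ a ∈ A, ∃ b ∈ B, ∃ c ∈ A, ∃ d ∈ B, a < b ∧ b < c ∧ c < d

/-- `α ∈ NC(n)`: a non-crossing partition of `{1,…,n}`. -/
def IsNCPartition (n : ℕ) (α : Finset (Finset ℕ)) : Prop :=
  IsPartitionOf n α ∧ ¬ IsCrossing α

/-- Reverse refinement order `α ≤ β`: every block of `α` is contained in a block of `β`
(equivalently, every block of `β` is a union of blocks of `α`). -/
def Refines (α β : Finset (Finset ℕ)) : Prop := ∀ V ∈ α, ∃ W ∈ β, V ⊆ W

/-- The partial order `α ≪ β`: `α ≤ β` and for every block `W` of `β` there is a block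
`V` of `α` containing both `min W` and `max W`. -/
def LL (α β : Finset (Finset ℕ)) : Prop :=
  Refines α β ∧ ∀ W ∈ β, ∃ V ∈ α, fmin W ∈ V ∧ fmax W ∈ V

/-- A block `V` (of `α`) is `β`-special: some block `W` of `β` has the same min and max. -/
def SpecialBlock (β : Finset (Finset ℕ)) (V : Finset ℕ) : Prop :=
  ∃ W ∈ β, fmin V = fmin W ∧ fmax V = fmax W

/-- `V` is an outer block of `α`: no block of `α` strictly nests around it. -/
def OuterBlock (α : Finset (Finset ℕ)) (V : Finset ℕ) : Prop :=
  ∀ V' ∈ α, ¬ (fmin V' < fmin V ∧ fmax V < fmax V')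

/-- `π` is a linked partition of the finite set `F ⊆ ℕ`. -/
def IsLinkedPartitionOfSet (F : Finset ℕ) (π : Finset (Finset ℕ)) : Prop :=
  (∀ A ∈ π, A.Nonempty) ∧ (∀ A ∈ π, A ⊆ F) ∧ (∀ m ∈ F, ∃ A ∈ π, m ∈ A) ∧
    ∀ A ∈ π, ∀ B ∈ π, A ≠ B →
      A ∩ B = ∅ ∨
        (2 ≤ A.card ∧ 2 ≤ B.card ∧ (A ∩ B).card = 1 ∧ fmin A ≠ fmin B ∧
          ∀ x ∈ A ∩ B, x = fmin A ∨ x = fmin B)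

/-- `π ∈ NCL(F)`: a non-crossing linked partition of the finite set `F`. -/
def IsNCLOfSet (F : Finset ℕ) (π : Finset (Finset ℕ)) : Prop :=
  IsLinkedPartitionOfSet F π ∧ ¬ IsCrossing π

/-- `π ∈ NCL(n)`: a non-crossing linked partition of `{1,…,n}`. -/
def IsNCL (n : ℕ) (π : Finset (Finset ℕ)) : Prop :=
  IsNCLOfSet (Finset.Icc 1 n) π

/-- The number of blocks of `π` containing `m`. -/
noncomputable def coverCount (π : Finset (Finset ℕ)) (m : ℕ) : ℕ :=
  (π.filter fun A => m ∈ A).card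

/-- `m` is singly-covered by `π`: it lies in exactly one block. -/
def SinglyCovered (π : Finset (Finset ℕ)) (m : ℕ) : Prop := coverCount π m = 1

/-- `m` is doubly-covered by `π`: it lies in exactly two blocks. -/
def DoublyCovered (π : Finset (Finset ℕ)) (m : ℕ) : Prop := coverCount π m = 2

/-- The partition `π̂` generated by the blocks of `π`: its blocks are the connected
components of the ground set under the relation of lying in a common block of `π`. -/
noncomputable def genPart (π : Finset (Finset ℕ)) : Finset (Finset ℕ) :=
  (π.sup id).image fun m =>
    (π.sup id).filter fun x =>
      Relation.EqvGen (fun a b => ∃ A ∈ π, a ∈ A ∧ b ∈ A) m x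

/-- The unlinking `π̌` of a linked partition `π`. -/
noncomputable def unlink (π : Finset (Finset ℕ)) : Finset (Finset ℕ) :=
  π.image fun A => if SinglyCovered π (fmin A) then A else A.erase (fmin A)

/-- The block of `α` containing `m` (empty if there is none). -/
noncomputable def blockOf (α : Finset (Finset ℕ)) (m : ℕ) : Finset ℕ :=
  (α.filter fun V => m ∈ V).sup id

/-- The successor of `m` in the cycle on the block `V` (elements in increasing order). -/
noncomputable def nextInBlock (V : Finset ℕ) (m : ℕ) : ℕ :=
  if m = fmax V then fmin V else fmin (V.filter fun x => m < x)

/-- The predecessor of `m` in the cycle on the block `V`. -/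
noncomputable def prevInBlock (V : Finset ℕ) (m : ℕ) : ℕ :=
  if m = fmin V then fmax V else fmax (V.filter fun x => x < m)

/-- The permutation `P_α` associated to a partition `α`, as a function: each block
`{i₁ < i₂ < ⋯ < iₘ}` becomes the cycle `i₁ ↦ i₂ ↦ ⋯ ↦ iₘ ↦ i₁`. -/
noncomputable def permOf (α : Finset (Finset ℕ)) (m : ℕ) : ℕ :=
  if m ∈ blockOf α m then nextInBlock (blockOf α m) m else m

/-- The inverse permutation `P_α⁻¹`, as a function. -/
noncomputable def permOfInv (α : Finset (Finset ℕ)) (m : ℕ) : ℕ :=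
  if m ∈ blockOf α m then prevInBlock (blockOf α m) m else m

/-- The action `τ·α` of a map `τ` on a partition `α = {V₁,…,V_p}`, giving
`{τ(V₁),…,τ(V_p)}`. -/
def mapPart (τ : ℕ → ℕ) (α : Finset (Finset ℕ)) : Finset (Finset ℕ) :=
  α.image fun V => V.image τ

/-- The cycled unlinking `π° := P_{π̂}⁻¹ · π̌`. -/
noncomputable def cycUnlink (π : Finset (Finset ℕ)) : Finset (Finset ℕ) :=
  mapPart (permOfInv (genPart π)) (unlink π)

/-- `NC(n)` as a finset. -/
noncomputable def NCF (n : ℕ) : Finset (Finset (Finset ℕ)) :=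
  ((Finset.Icc 1 n).powerset.powerset).filter (IsNCPartition n)

/-- `NCL(n)` as a finset. -/
noncomputable def NCLF (n : ℕ) : Finset (Finset (Finset ℕ)) :=
  ((Finset.Icc 1 n).powerset.powerset).filter (IsNCL n)

/-- The restriction `π|_E`: the blocks of `π` contained in `E`. -/
def restrictL (π : Finset (Finset ℕ)) (E : Finset ℕ) : Finset (Finset ℕ) :=
  π.filter fun A => A ⊆ E

/-- The partition `β₀` obtained from `β` by leaving blocks of size `≤ 2` intact and
breaking each block `W` with `|W| ≥ 3` into the doubleton `{min W, max W}` together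
with `|W| - 2` singletons. -/
noncomputable def breakBlocks (β : Finset (Finset ℕ)) : Finset (Finset ℕ) :=
  β.biUnion fun W =>
    if W.card ≤ 2 then {W}
    else insert {fmin W, fmax W} ((W \ {fmin W, fmax W}).image fun x => ({x} : Finset ℕ))

namespace NCLProof

open Finset

/-! ### fmin / fmax basics -/

lemma fmin_mem {A : Finset ℕ} (h : A.Nonempty) : fmin A ∈ A := by
  have : sInf (A : Set ℕ) ∈ (A : Set ℕ) := Nat.sInf_mem (by exact_mod_cast h)
  exact_mod_cast this

lemma fmin_le {A : Finset ℕ} {a : ℕ} (ha : a ∈ A) : fmin A ≤ a :=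
  Nat.sInf_le (by exact_mod_cast ha)

lemma fmax_mem {A : Finset ℕ} (h : A.Nonempty) : fmax A ∈ A := by
  have : sSup (A : Set ℕ) ∈ (A : Set ℕ) :=
    Nat.sSup_mem (by exact_mod_cast h) A.finite_toSet.bddAbove
  exact_mod_cast this

lemma le_fmax {A : Finset ℕ} {a : ℕ} (ha : a ∈ A) : a ≤ fmax A :=
  le_csSup A.finite_toSet.bddAbove (by exact_mod_cast ha)

lemma fmin_eq_of {A : Finset ℕ} {a : ℕ} (ha : a ∈ A) (h : ∀ x ∈ A, a ≤ x) : fmin A = a :=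
  le_antisymm (fmin_le ha) (h _ (fmin_mem ⟨a, ha⟩))

lemma fmax_eq_of {A : Finset ℕ} {a : ℕ} (ha : a ∈ A) (h : ∀ x ∈ A, x ≤ a) : fmax A = a :=
  le_antisymm (h _ (fmax_mem ⟨a, ha⟩)) (le_fmax ha)

/-! ### nextInBlock / prevInBlock -/

lemma nextInBlock_fmax (V : Finset ℕ) : nextInBlock V (fmax V) = fmin V := if_pos rfl

lemma prevInBlock_fmin (V : Finset ℕ) : prevInBlock V (fmin V) = fmax V := if_pos rfl

lemma lt_nextInBlock {V : Finset ℕ} {m : ℕ} (hm : m ∈ V) (h : m ≠ fmax V) :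
    m < nextInBlock V m := by
  rw [nextInBlock, if_neg h]
  have hne : (V.filter fun x => m < x).Nonempty :=
    ⟨fmax V, mem_filter.mpr ⟨fmax_mem ⟨m, hm⟩, lt_of_le_of_ne (le_fmax hm) h⟩⟩
  exact (mem_filter.mp (fmin_mem hne)).2

lemma nextInBlock_mem {V : Finset ℕ} {m : ℕ} (hm : m ∈ V) : nextInBlock V m ∈ V := by
  rw [nextInBlock]
  split
  · exact fmin_mem ⟨m, hm⟩
  · next h =>
    have hne : (V.filter fun x => m < x).Nonempty :=
      ⟨fmax V, mem_filter.mpr ⟨fmax_mem ⟨m, hm⟩, lt_of_le_of_ne (le_fmax hm) h⟩⟩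
    exact (mem_filter.mp (fmin_mem hne)).1

lemma nextInBlock_le {V : Finset ℕ} {m y : ℕ} (hy : y ∈ V) (h : m < y) :
    nextInBlock V m ≤ y := by
  have hne : m ≠ fmax V := fun e => absurd (le_fmax hy) (by omega)
  rw [nextInBlock, if_neg hne]
  exact fmin_le (mem_filter.mpr ⟨hy, h⟩)

lemma prevInBlock_lt {V : Finset ℕ} {m : ℕ} (hm : m ∈ V) (h : m ≠ fmin V) :
    prevInBlock V m < m := by
  rw [prevInBlock, if_neg h]
  have hne : (V.filter fun x => x < m).Nonempty :=
    ⟨fmin V, mem_filter.mpr ⟨fmin_mem ⟨m, hm⟩, lt_of_le_of_ne (fmin_le hm) (Ne.symm h)⟩⟩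
  exact (mem_filter.mp (fmax_mem hne)).2

lemma prevInBlock_mem {V : Finset ℕ} {m : ℕ} (hm : m ∈ V) : prevInBlock V m ∈ V := by
  rw [prevInBlock]
  split
  · exact fmax_mem ⟨m, hm⟩
  · next h =>
    have hne : (V.filter fun x => x < m).Nonempty :=
      ⟨fmin V, mem_filter.mpr ⟨fmin_mem ⟨m, hm⟩, lt_of_le_of_ne (fmin_le hm) (Ne.symm h)⟩⟩
    exact (mem_filter.mp (fmax_mem hne)).1

lemma le_prevInBlock {V : Finset ℕ} {m y : ℕ} (hy : y ∈ V) (h : y < m) :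
    y ≤ prevInBlock V m := by
  have hne : m ≠ fmin V := fun e => absurd (fmin_le hy) (by omega)
  rw [prevInBlock, if_neg hne]
  exact le_fmax (mem_filter.mpr ⟨hy, h⟩)

lemma prevInBlock_nextInBlock {V : Finset ℕ} {m : ℕ} (hm : m ∈ V) :
    prevInBlock V (nextInBlock V m) = m := by
  by_cases h : m = fmax V
  · subst h; rw [nextInBlock_fmax, prevInBlock_fmin]
  · have h1 : m < nextInBlock V m := lt_nextInBlock hm h
    have h2 : nextInBlock V m ∈ V := nextInBlock_mem hm
    have h3 : nextInBlock V m ≠ fmin V := fun e => absurd (fmin_le hm) (by omega)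
    rw [prevInBlock, if_neg h3]
    refine fmax_eq_of (mem_filter.mpr ⟨hm, h1⟩) ?_
    intro x hx
    rcases mem_filter.mp hx with ⟨hxV, hxlt⟩
    by_contra hc
    exact absurd (nextInBlock_le (m := m) hxV (by omega)) (by omega)

lemma nextInBlock_prevInBlock {V : Finset ℕ} {m : ℕ} (hm : m ∈ V) :
    nextInBlock V (prevInBlock V m) = m := by
  by_cases h : m = fmin V
  · subst h; rw [prevInBlock_fmin, nextInBlock_fmax]
  · have h1 : prevInBlock V m < m := prevInBlock_lt hm h
    have h2 : prevInBlock V m ∈ V := prevInBlock_mem hm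
    have h3 : prevInBlock V m ≠ fmax V := fun e => absurd (le_fmax hm) (by omega)
    rw [nextInBlock, if_neg h3]
    refine fmin_eq_of (mem_filter.mpr ⟨hm, h1⟩) ?_
    intro x hx
    rcases mem_filter.mp hx with ⟨hxV, hxlt⟩
    by_contra hc
    exact absurd (le_prevInBlock (m := m) hxV (by omega)) (by omega)

/-! ### partitions and blockOf / permOf -/

lemma part_disjoint {F : Finset ℕ} {α : Finset (Finset ℕ)} (hp : IsPartitionOfSet F α)
    {V W : Finset ℕ} (hV : V ∈ α) (hW : W ∈ α) {m : ℕ} (hmV : m ∈ V) (hmW : m ∈ W) :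
    V = W := by
  by_contra h
  have := hp.2.2.2 V hV W hW h
  have : m ∈ V ∩ W := mem_inter.mpr ⟨hmV, hmW⟩
  rw [hp.2.2.2 V hV W hW h] at this
  exact absurd this (notMem_empty m)

lemma blockOf_eq {F : Finset ℕ} {α : Finset (Finset ℕ)} (hp : IsPartitionOfSet F α)
    {V : Finset ℕ} {m : ℕ} (hV : V ∈ α) (hm : m ∈ V) : blockOf α m = V := by
  rw [blockOf]
  have : α.filter (fun W => m ∈ W) = {V} := by
    ext W
    simp only [mem_filter, mem_singleton]
    constructor
    · rintro ⟨hW, hmW⟩; exact (part_disjoint hp hW hV hmW hm).symm ▸ rfl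
    · rintro rfl; exact ⟨hV, hm⟩
  rw [this, sup_singleton, id]

lemma permOf_eq {F : Finset ℕ} {α : Finset (Finset ℕ)} (hp : IsPartitionOfSet F α)
    {V : Finset ℕ} {m : ℕ} (hV : V ∈ α) (hm : m ∈ V) :
    permOf α m = nextInBlock V m := by
  rw [permOf, blockOf_eq hp hV hm, if_pos hm]

lemma permOfInv_eq {F : Finset ℕ} {α : Finset (Finset ℕ)} (hp : IsPartitionOfSet F α)
    {V : Finset ℕ} {m : ℕ} (hV : V ∈ α) (hm : m ∈ V) :
    permOfInv α m = prevInBlock V m := by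
  rw [permOfInv, blockOf_eq hp hV hm, if_pos hm]

lemma permOf_mem {F : Finset ℕ} {α : Finset (Finset ℕ)} (hp : IsPartitionOfSet F α)
    {V : Finset ℕ} {m : ℕ} (hV : V ∈ α) (hm : m ∈ V) : permOf α m ∈ V := by
  rw [permOf_eq hp hV hm]; exact nextInBlock_mem hm

lemma permOfInv_mem {F : Finset ℕ} {α : Finset (Finset ℕ)} (hp : IsPartitionOfSet F α)
    {V : Finset ℕ} {m : ℕ} (hV : V ∈ α) (hm : m ∈ V) : permOfInv α m ∈ V := by
  rw [permOfInv_eq hp hV hm]; exact prevInBlock_mem hm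

lemma permOfInv_permOf {F : Finset ℕ} {α : Finset (Finset ℕ)} (hp : IsPartitionOfSet F α)
    {V : Finset ℕ} {m : ℕ} (hV : V ∈ α) (hm : m ∈ V) :
    permOfInv α (permOf α m) = m := by
  rw [permOf_eq hp hV hm, permOfInv_eq hp hV (nextInBlock_mem hm)]
  exact prevInBlock_nextInBlock hm

lemma permOf_permOfInv {F : Finset ℕ} {α : Finset (Finset ℕ)} (hp : IsPartitionOfSet F α)
    {V : Finset ℕ} {m : ℕ} (hV : V ∈ α) (hm : m ∈ V) :
    permOf α (permOfInv α m) = m := by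
  rw [permOfInv_eq hp hV hm, permOf_eq hp hV (prevInBlock_mem hm)]
  exact nextInBlock_prevInBlock hm

lemma exists_block {F : Finset ℕ} {α : Finset (Finset ℕ)} (hp : IsPartitionOfSet F α)
    {m : ℕ} (hm : m ∈ F) : ∃ V ∈ α, m ∈ V := hp.2.2.1 m hm

end NCLProof
namespace NCLProof

open Finset

/-! ### the connectivity relation -/

def Conn (π : Finset (Finset ℕ)) : ℕ → ℕ → Prop :=
  Relation.EqvGen (fun a b => ∃ A ∈ π, a ∈ A ∧ b ∈ A)

lemma conn_refl (π : Finset (Finset ℕ)) (x : ℕ) : Conn π x x := Relation.EqvGen.refl x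

lemma conn_symm {π : Finset (Finset ℕ)} {x y : ℕ} (h : Conn π x y) : Conn π y x :=
  Relation.EqvGen.symm _ _ h

lemma conn_trans {π : Finset (Finset ℕ)} {x y z : ℕ} (h1 : Conn π x y) (h2 : Conn π y z) :
    Conn π x z := Relation.EqvGen.trans _ _ _ h1 h2

lemma conn_of_mem {π : Finset (Finset ℕ)} {A : Finset ℕ} {x y : ℕ} (hA : A ∈ π)
    (hx : x ∈ A) (hy : y ∈ A) : Conn π x y := Relation.EqvGen.rel _ _ ⟨A, hA, hx, hy⟩

/-- Generic invariance principle: a predicate preserved by single-block steps is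
constant on connected components. -/
lemma conn_invariant {π : Finset (Finset ℕ)} (S : ℕ → Prop)
    (hS : ∀ A ∈ π, ∀ x ∈ A, ∀ y ∈ A, S x → S y) :
    ∀ x y, Conn π x y → (S x ↔ S y) := by
  intro x y h
  induction h with
  | rel a b hab =>
    obtain ⟨A, hA, ha, hb⟩ := hab
    exact ⟨hS A hA a ha b hb, hS A hA b hb a ha⟩
  | refl a => exact Iff.rfl
  | symm a b _ ih => exact ih.symm
  | trans a b c _ _ ih1 ih2 => exact ih1.trans ih2

/-! ### basic NCL facts -/

lemma no_cross {π : Finset (Finset ℕ)} (hnc : ¬ IsCrossing π) {A B : Finset ℕ}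
    (hA : A ∈ π) (hB : B ∈ π) (hAB : A ≠ B) {a b c d : ℕ}
    (ha : a ∈ A) (hb : b ∈ B) (hc : c ∈ A) (hd : d ∈ B)
    (h1 : a < b) (h2 : b < c) (h3 : c < d) : False :=
  hnc ⟨A, hA, B, hB, hAB, a, ha, b, hb, c, hc, d, hd, h1, h2, h3⟩

lemma block_subset {n : ℕ} {π : Finset (Finset ℕ)} (hπ : IsNCL n π) {A : Finset ℕ}
    (hA : A ∈ π) : A ⊆ Finset.Icc 1 n := hπ.1.2.1 A hA

lemma shared_pt {n : ℕ} {π : Finset (Finset ℕ)} (hπ : IsNCL n π) {A B : Finset ℕ} {x : ℕ}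
    (hA : A ∈ π) (hB : B ∈ π) (hne : A ≠ B) (hxA : x ∈ A) (hxB : x ∈ B) :
    (x = fmin A ∨ x = fmin B) ∧ fmin A ≠ fmin B ∧ 2 ≤ A.card ∧ 2 ≤ B.card := by
  rcases hπ.1.2.2.2 A hA B hB hne with h | h
  · exfalso
    have : x ∈ A ∩ B := mem_inter.mpr ⟨hxA, hxB⟩
    rw [h] at this
    exact absurd this (notMem_empty x)
  · exact ⟨h.2.2.2.2 x (mem_inter.mpr ⟨hxA, hxB⟩), h.2.2.2.1, h.1, h.2.1⟩

lemma block_eq_of_mem {n : ℕ} {π : Finset (Finset ℕ)} (hπ : IsNCL n π)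
    {A B C : Finset ℕ} {m : ℕ} (hA : A ∈ π) (hB : B ∈ π) (hC : C ∈ π)
    (hmA : m ∈ A) (hmB : m ∈ B) (hmC : m ∈ C) (hAB : A ≠ B) (hAC : A ≠ C) : B = C := by
  by_contra hBC
  obtain ⟨e1, f1, -⟩ := shared_pt hπ hA hB hAB hmA hmB
  obtain ⟨e2, f2, -⟩ := shared_pt hπ hA hC hAC hmA hmC
  obtain ⟨e3, f3, -⟩ := shared_pt hπ hB hC hBC hmB hmC
  rcases e1 with e1 | e1 <;> rcases e2 with e2 | e2 <;> rcases e3 with e3 | e3 <;> omega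

lemma coverCount_cases {n : ℕ} {π : Finset (Finset ℕ)} (hπ : IsNCL n π) {m : ℕ}
    (hm : m ∈ Finset.Icc 1 n) : SinglyCovered π m ∨ DoublyCovered π m := by
  have h1 : 1 ≤ coverCount π m := by
    obtain ⟨A, hA, hmA⟩ := hπ.1.2.2.1 m hm
    exact Finset.card_pos.mpr ⟨A, mem_filter.mpr ⟨hA, hmA⟩⟩
  have h2 : coverCount π m ≤ 2 := by
    by_contra hc
    have : 2 < (π.filter fun A => m ∈ A).card := by
      unfold coverCount at hc; omega
    obtain ⟨A, B, C, hA, hB, hC, hAB, hAC, hBC⟩ := Finset.two_lt_card_iff.mp this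
    exact hBC (block_eq_of_mem hπ (mem_filter.mp hA).1 (mem_filter.mp hB).1
      (mem_filter.mp hC).1 (mem_filter.mp hA).2 (mem_filter.mp hB).2
      (mem_filter.mp hC).2 hAB hAC)
  unfold SinglyCovered DoublyCovered
  omega

lemma singly_unique {π : Finset (Finset ℕ)} {m : ℕ} (h : SinglyCovered π m)
    {A B : Finset ℕ} (hA : A ∈ π) (hB : B ∈ π) (hmA : m ∈ A) (hmB : m ∈ B) : A = B := by
  have := Finset.card_le_one.mp (le_of_eq h)
  exact this A (mem_filter.mpr ⟨hA, hmA⟩) B (mem_filter.mpr ⟨hB, hmB⟩)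

lemma doubly_of_two {n : ℕ} {π : Finset (Finset ℕ)} (hπ : IsNCL n π) {m : ℕ}
    {A B : Finset ℕ} (hA : A ∈ π) (hB : B ∈ π) (hne : A ≠ B) (hmA : m ∈ A) (hmB : m ∈ B) :
    DoublyCovered π m := by
  rcases coverCount_cases hπ (block_subset hπ hA hmA) with h | h
  · exact absurd (singly_unique h hA hB hmA hmB) hne
  · exact h

/-! ### ground set and components -/

lemma sup_eq_Icc {n : ℕ} {π : Finset (Finset ℕ)} (hπ : IsNCL n π) :
    π.sup id = Finset.Icc 1 n := by
  ext x
  simp only [Finset.mem_sup, id]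
  constructor
  · rintro ⟨A, hA, hx⟩; exact block_subset hπ hA hx
  · intro hx; exact hπ.1.2.2.1 x hx

noncomputable def comp (n : ℕ) (π : Finset (Finset ℕ)) (m : ℕ) : Finset ℕ :=
  (Finset.Icc 1 n).filter fun x => Conn π m x

lemma genPart_eq {n : ℕ} {π : Finset (Finset ℕ)} (hπ : IsNCL n π) :
    genPart π = (Finset.Icc 1 n).image (comp n π) := by
  rw [genPart, sup_eq_Icc hπ]; rfl

lemma mem_comp {n : ℕ} {π : Finset (Finset ℕ)} {m x : ℕ} :
    x ∈ comp n π m ↔ x ∈ Finset.Icc 1 n ∧ Conn π m x := mem_filter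

lemma conn_Icc {n : ℕ} {π : Finset (Finset ℕ)} (hπ : IsNCL n π) {x y : ℕ}
    (h : Conn π x y) (hx : x ∈ Finset.Icc 1 n) : y ∈ Finset.Icc 1 n := by
  refine (conn_invariant (fun z => z ∈ Finset.Icc 1 n) ?_ x y h).mp hx
  intro A hA a _ b hb _
  exact block_subset hπ hA hb

lemma comp_eq_comp {n : ℕ} {π : Finset (Finset ℕ)} {m m' : ℕ} (h : Conn π m m') :
    comp n π m = comp n π m' := by
  ext x
  simp only [mem_comp]
  exact and_congr_right fun _ => ⟨fun h2 => conn_trans (conn_symm h) h2, fun h2 => conn_trans h h2⟩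

lemma self_mem_comp {n : ℕ} {π : Finset (Finset ℕ)} {m : ℕ} (hm : m ∈ Finset.Icc 1 n) :
    m ∈ comp n π m := mem_comp.mpr ⟨hm, conn_refl π m⟩

lemma block_subset_comp {n : ℕ} {π : Finset (Finset ℕ)} (hπ : IsNCL n π) {A : Finset ℕ}
    (hA : A ∈ π) {a : ℕ} (ha : a ∈ A) : A ⊆ comp n π a := fun x hx =>
  mem_comp.mpr ⟨block_subset hπ hA hx, conn_of_mem hA ha hx⟩

/-! ### the key extraction lemmas -/

/-- KEY2: a chain from `x` to `y` must pass a block straddling any intermediate point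
not connected to `x`. -/
lemma key2 {n : ℕ} {π : Finset (Finset ℕ)} (hπ : IsNCL n π) :
    ∀ x y, Conn π x y → ∀ b, min x y < b → b < max x y → ¬ Conn π x b →
      ∃ A ∈ π, ∃ u ∈ A, ∃ v ∈ A, u < b ∧ b < v ∧ Conn π x u := by
  intro x y h
  induction h with
  | rel a b' hab =>
    intro b hb1 hb2 _
    obtain ⟨A, hA, ha, hb'⟩ := hab
    have hmin : min a b' ∈ A := by
      rcases le_total a b' with h | h
      · rwa [min_eq_left h]
      · rwa [min_eq_right h]
    have hmax : max a b' ∈ A := by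
      rcases le_total a b' with h | h
      · rwa [max_eq_right h]
      · rwa [max_eq_left h]
    exact ⟨A, hA, min a b', hmin, max a b', hmax, hb1, hb2, conn_of_mem hA ha hmin⟩
  | refl a => intro b hb1 hb2 _; simp at hb1 hb2; omega
  | symm a b' hab ih =>
    intro b hb1 hb2 hnb
    have hE : Conn π a b' := hab
    have hnb' : ¬ Conn π a b := fun hc => hnb (conn_trans (conn_symm hE) hc)
    obtain ⟨A, hA, u, hu, v, hv, h3, h4, h5⟩ := ih b (by omega) (by omega) hnb'
    exact ⟨A, hA, u, hu, v, hv, h3, h4, conn_trans (conn_symm hE) h5⟩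
  | trans a b' c hab hbc ih1 ih2 =>
    intro b hb1 hb2 hnb
    have hE1 : Conn π a b' := hab
    have hbne : b ≠ b' := fun e => hnb (e ▸ hE1)
    have hcase : (min a b' < b ∧ b < max a b') ∨ (min b' c < b ∧ b < max b' c) := by omega
    rcases hcase with ⟨h1, h2⟩ | ⟨h1, h2⟩
    · exact ih1 b h1 h2 hnb
    · have hnb2 : ¬ Conn π b' b := fun hc => hnb (conn_trans hE1 hc)
      obtain ⟨A, hA, u, hu, v, hv, h3, h4, h5⟩ := ih2 b h1 h2 hnb2
      exact ⟨A, hA, u, hu, v, hv, h3, h4, conn_trans hE1 h5⟩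

end NCLProof
namespace NCLProof

open Finset

/-- KEY1: the component of a point strictly inside a block-chord, not connected to the
chord's endpoints, stays strictly inside. -/
lemma key1 {n : ℕ} {π : Finset (Finset ℕ)} (hπ : IsNCL n π) {A : Finset ℕ} (hA : A ∈ π)
    {u v : ℕ} (hu : u ∈ A) (hv : v ∈ A) :
    ∀ x y, Conn π x y → ((u < x ∧ x < v ∧ ¬ Conn π u x) ↔ (u < y ∧ y < v ∧ ¬ Conn π u y)) := by
  refine conn_invariant _ ?_
  rintro C hC x hx y hy ⟨h1, h2, h3⟩
  have hCA : C ≠ A := fun e => h3 (conn_of_mem hA hu (e ▸ hx))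
  have hy3 : ¬ Conn π u y := fun hc => h3 (conn_trans hc (conn_of_mem hC hy hx))
  refine ⟨?_, ?_, hy3⟩
  · rcases lt_trichotomy y u with h | h | h
    · exact absurd (no_cross hπ.2 hC hA hCA hy hu hx hv h h1 h2) id
    · exact absurd (h ▸ conn_refl π u) hy3
    · exact h
  · rcases lt_trichotomy y v with h | h | h
    · exact h
    · exact absurd (h ▸ conn_of_mem hA hu hv) hy3
    · exact absurd (no_cross hπ.2 hA hC hCA.symm hu hx hv hy h1 h2 h) id

/-- KEY3: no element of the component of a block `A` lies strictly between `fmin A` and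
the second-smallest element of `A`. -/
lemma gap {n : ℕ} {π : Finset (Finset ℕ)} (hπ : IsNCL n π) {A : Finset ℕ} (hA : A ∈ π)
    (h2 : (A.erase (fmin A)).Nonempty) {x : ℕ} (hconn : Conn π (fmin A) x)
    (hx : fmin A < x) : fmin (A.erase (fmin A)) ≤ x := by
  set m := fmin A with hm
  set a2 := fmin (A.erase m) with ha2
  have hmA : m ∈ A := fmin_mem (h2.mono (erase_subset _ _))
  have ha2A : a2 ∈ A := (mem_erase.mp (fmin_mem h2)).2
  have ha2m : m < a2 := lt_of_le_of_ne (fmin_le ha2A) (Ne.symm (mem_erase.mp (fmin_mem h2)).1)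
  have hAelts : ∀ z ∈ A, z = m ∨ a2 ≤ z := by
    intro z hz
    by_cases h : z = m
    · exact Or.inl h
    · exact Or.inr (fmin_le (mem_erase.mpr ⟨h, hz⟩))
  by_contra hc
  push_neg at hc
  -- the invariant predicate
  set S : ℕ → Prop := fun z => m < z ∧ z < a2 ∧ ∀ C ∈ π, m ∈ C → z ∉ C with hS
  have fmin_lt : ∀ C ∈ π, C ≠ A → m ∈ C → fmin C < m := by
    intro C hC hCA hmC
    obtain ⟨e, f, -⟩ := shared_pt hπ hC hA hCA hmC hmA
    have : fmin C ≤ m := fmin_le hmC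
    rcases e with e | e <;> omega
  have hSx : S x := by
    refine ⟨hx, hc, ?_⟩
    intro C hC hmC hxC
    by_cases hCA : C = A
    · subst hCA
      rcases hAelts x hxC with h | h <;> omega
    · have h1 := fmin_lt C hC hCA hmC
      exact no_cross hπ.2 hC hA hCA (fmin_mem ⟨m, hmC⟩) hmA hxC ha2A h1 hx hc
  have hinv : ∀ a b, Conn π a b → (S a ↔ S b) := by
    refine conn_invariant S ?_
    rintro D hD a ha b hb ⟨k1, k2, k3⟩
    have hmD : m ∉ D := fun h => k3 D hD h ha
    have hDA : D ≠ A := fun e => hmD (e ▸ hmA)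
    have hdisj : ∀ z, z ∈ D → z ∉ A := by
      intro z hzD hzA
      obtain ⟨e, f, -⟩ := shared_pt hπ hD hA hDA hzD hzA
      rcases hAelts z hzA with h | h
      · exact hmD (h ▸ hzD)
      · have : fmin A = m := rfl
        have hz : fmin D ≤ a := fmin_le ha
        rcases e with e | e <;> omega
    have hb1 : m < b := by
      rcases lt_trichotomy b m with h | h | h
      · exact absurd (no_cross hπ.2 hD hA hDA hb hmA ha ha2A h k1 k2) id
      · exact absurd (h ▸ hb) hmD
      · exact h
    have hb2 : b < a2 := by
      rcases lt_trichotomy b a2 with h | h | h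
      · exact h
      · exact absurd (by rw [h]; exact ha2A) (hdisj b hb)
      · exact absurd (no_cross hπ.2 hA hD hDA.symm hmA ha ha2A hb k1 k2 h) id
    refine ⟨hb1, hb2, ?_⟩
    intro C hC hmC hbC
    by_cases hCA : C = A
    · exact hdisj b hb (hCA ▸ hbC)
    · have h1 := fmin_lt C hC hCA hmC
      exact no_cross hπ.2 hC hA hCA (fmin_mem ⟨m, hmC⟩) hmA hbC ha2A h1 hb1 hb2
  have := (hinv m x hconn).mpr hSx
  exact absurd this.1 (lt_irrefl m)

/-- If the only block containing `m` is `{m}`, the component of `m` is `{m}`. -/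
lemma comp_singleton {π : Finset (Finset ℕ)}
    {m : ℕ} (honly : ∀ C ∈ π, m ∈ C → C = {m}) :
    ∀ x, Conn π m x → x = m := by
  intro x hx
  refine (conn_invariant (fun z => z = m) ?_ m x hx).mp rfl
  rintro D hD a ha b hb rfl
  have := honly D hD ha
  subst this
  simpa using hb

/-- The generated partition is a non-crossing partition of `{1,…,n}`. -/
lemma genPart_NC {n : ℕ} {π : Finset (Finset ℕ)} (hπ : IsNCL n π) :
    IsNCPartition n (genPart π) := by
  constructor
  · constructor
    · -- nonempty
      intro V hV
      rw [genPart_eq hπ] at hV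
      obtain ⟨m, hm, rfl⟩ := mem_image.mp hV
      exact ⟨m, self_mem_comp hm⟩
    refine ⟨?_, ?_, ?_⟩
    · intro V hV
      rw [genPart_eq hπ] at hV
      obtain ⟨m, hm, rfl⟩ := mem_image.mp hV
      exact filter_subset _ _
    · intro m hm
      exact ⟨comp n π m, by rw [genPart_eq hπ]; exact mem_image.mpr ⟨m, hm, rfl⟩,
        self_mem_comp hm⟩
    · intro V hV W hW hne
      rw [genPart_eq hπ] at hV hW
      obtain ⟨a, ha, rfl⟩ := mem_image.mp hV
      obtain ⟨b, hb, rfl⟩ := mem_image.mp hW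
      rw [Finset.eq_empty_iff_forall_notMem]
      intro x hx
      rw [mem_inter, mem_comp, mem_comp] at hx
      exact hne (comp_eq_comp (conn_trans hx.1.2 (conn_symm hx.2.2)))
  · -- non-crossing
    rintro ⟨X, hX, Y, hY, hXY, a, haX, b, hbY, c, hcX, d, hdY, h1, h2, h3⟩
    rw [genPart_eq hπ] at hX hY
    obtain ⟨mx, hmx, rfl⟩ := mem_image.mp hX
    obtain ⟨my, hmy, rfl⟩ := mem_image.mp hY
    have hac : Conn π a c := conn_trans (conn_symm (mem_comp.mp haX).2) (mem_comp.mp hcX).2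
    have hbd : Conn π b d := conn_trans (conn_symm (mem_comp.mp hbY).2) (mem_comp.mp hdY).2
    have hab : ¬ Conn π a b := by
      intro h
      exact hXY (comp_eq_comp (conn_trans (mem_comp.mp haX).2
        (conn_trans h (conn_symm (mem_comp.mp hbY).2))))
    -- extract straddling block for b between a and c
    obtain ⟨A, hA, u, hu, v, hv, hub, hbv, hau⟩ :=
      key2 hπ a c hac b (by omega) (by omega) hab
    have hub' : ¬ Conn π u b := fun h => hab (conn_trans hau h)
    -- b's component is trapped in (u,v)
    have hd' : u < d ∧ d < v ∧ ¬ Conn π u d :=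
      (key1 hπ hA hu hv b d hbd).mp ⟨hub, hbv, hub'⟩
    -- extract straddling block for c between b and d
    have hbc : ¬ Conn π b c := fun h => hab (conn_trans hac (conn_symm h))
    obtain ⟨B, hB, s, hs, t, ht, hsc, hct, hbs⟩ :=
      key2 hπ b d hbd c (by omega) (by omega) hbc
    have hsc' : ¬ Conn π s c := fun h => hbc (conn_trans hbs h)
    -- c's component is trapped in (s,t): in particular u
    have hcu : Conn π c u := conn_trans (conn_symm hac) hau
    have hu' : s < u ∧ u < t ∧ ¬ Conn π s u :=
      (key1 hπ hB hs ht c u hcu).mp ⟨hsc, hct, hsc'⟩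
    -- s is in b's component, hence trapped in (u,v)
    have hs' : u < s ∧ s < v ∧ ¬ Conn π u s :=
      (key1 hπ hA hu hv b s hbs).mp ⟨hub, hbv, hub'⟩
    omega

end NCLProof
namespace NCLProof

open Finset

/-! ### the root of a block in the forest structure -/

noncomputable def parentB (π : Finset (Finset ℕ)) (D : Finset ℕ) : Finset ℕ :=
  if h : ∃ E, E ∈ π ∧ fmin D ∈ E ∧ E ≠ D then h.choose else D

lemma parentB_spec {π : Finset (Finset ℕ)} {D : Finset ℕ}
    (h : ∃ E, E ∈ π ∧ fmin D ∈ E ∧ E ≠ D) :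
    parentB π D ∈ π ∧ fmin D ∈ parentB π D ∧ parentB π D ≠ D := by
  rw [parentB, dif_pos h]
  exact h.choose_spec

lemma parentB_fmin_lt {n : ℕ} {π : Finset (Finset ℕ)} (hπ : IsNCL n π) {D : Finset ℕ}
    (hD : D ∈ π) (h : ∃ E, E ∈ π ∧ fmin D ∈ E ∧ E ≠ D) :
    fmin (parentB π D) < fmin D := by
  obtain ⟨hP, hmP, hPD⟩ := parentB_spec h
  have hne : D.Nonempty := hπ.1.1 D hD
  obtain ⟨e, f, -⟩ := shared_pt hπ hD hP hPD.symm (fmin_mem hne) hmP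
  have := fmin_le hmP
  omega

lemma parentB_unique {n : ℕ} {π : Finset (Finset ℕ)} (hπ : IsNCL n π) {D E : Finset ℕ}
    (hD : D ∈ π) (hE : E ∈ π) (hED : E ≠ D) (hmE : fmin D ∈ E) :
    parentB π D = E := by
  have h : ∃ E, E ∈ π ∧ fmin D ∈ E ∧ E ≠ D := ⟨E, hE, hmE, hED⟩
  obtain ⟨hP, hmP, hPD⟩ := parentB_spec (π := π) h
  have hne : D.Nonempty := hπ.1.1 D hD
  exact block_eq_of_mem hπ hD hP hE (fmin_mem hne) hmP hmE hPD.symm hED.symm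

noncomputable def rootB (π : Finset (Finset ℕ)) : ℕ → Finset ℕ → Finset ℕ
  | 0, D => D
  | k+1, D => if ∃ E, E ∈ π ∧ fmin D ∈ E ∧ E ≠ D then rootB π k (parentB π D) else D

lemma rootB_stable {n : ℕ} {π : Finset (Finset ℕ)} (hπ : IsNCL n π) :
    ∀ k1 k2 (D : Finset ℕ), D ∈ π → fmin D < k1 → fmin D < k2 →
      rootB π k1 D = rootB π k2 D := by
  intro k1
  induction k1 using Nat.strong_induction_on with
  | _ k1 ih =>
    intro k2 D hD h1 h2
    obtain ⟨a, rfl⟩ : ∃ a, k1 = a + 1 := ⟨k1 - 1, by omega⟩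
    obtain ⟨b, rfl⟩ : ∃ b, k2 = b + 1 := ⟨k2 - 1, by omega⟩
    by_cases h : ∃ E, E ∈ π ∧ fmin D ∈ E ∧ E ≠ D
    · have hlt := parentB_fmin_lt hπ hD h
      have hP := (parentB_spec h).1
      simp only [rootB, if_pos h]
      exact ih a (by omega) b (parentB π D) hP (by omega) (by omega)
    · simp only [rootB, if_neg h]

noncomputable def rootOf (π : Finset (Finset ℕ)) (D : Finset ℕ) : Finset ℕ :=
  rootB π (fmin D + 1) D

lemma rootOf_self {π : Finset (Finset ℕ)} {D : Finset ℕ}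
    (h : ∀ E ∈ π, fmin D ∈ E → E = D) : rootOf π D = D := by
  rw [rootOf]
  have h' : ¬ ∃ E, E ∈ π ∧ fmin D ∈ E ∧ E ≠ D := by
    rintro ⟨E, hE, hmE, hED⟩
    exact hED (h E hE hmE)
  simp only [rootB, if_neg h']

lemma rootOf_parent {n : ℕ} {π : Finset (Finset ℕ)} (hπ : IsNCL n π) {D E : Finset ℕ}
    (hD : D ∈ π) (hE : E ∈ π) (hED : E ≠ D) (hmE : fmin D ∈ E) :
    rootOf π D = rootOf π E := by
  have h : ∃ E, E ∈ π ∧ fmin D ∈ E ∧ E ≠ D := ⟨E, hE, hmE, hED⟩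
  have hpe : parentB π D = E := parentB_unique hπ hD hE hED hmE
  have hlt : fmin E < fmin D := hpe ▸ parentB_fmin_lt hπ hD h
  rw [rootOf, rootOf]
  have : rootB π (fmin D + 1) D = rootB π (fmin D) (parentB π D) := by
    simp only [rootB, if_pos h]
  rw [this, hpe]
  exact rootB_stable hπ _ _ E hE (by omega) (by omega)

/-- At most one block with singly covered minimum in each component. -/
lemma two_singly {n : ℕ} {π : Finset (Finset ℕ)} (hπ : IsNCL n π) {B C : Finset ℕ}
    (hB : B ∈ π) (hC : C ∈ π) (hBC : B ≠ C)
    (hsB : ∀ D ∈ π, fmin B ∈ D → D = B) (hsC : ∀ D ∈ π, fmin C ∈ D → D = C)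
    (hconn : Conn π (fmin B) (fmin C)) : False := by
  have hCne : C.Nonempty := hπ.1.1 C hC
  have hBne : B.Nonempty := hπ.1.1 B hB
  set S : ℕ → Prop := fun z => ∀ D ∈ π, z ∈ D → rootOf π D = B with hS
  have hinv : ∀ a b, Conn π a b → (S a ↔ S b) := by
    refine conn_invariant S ?_
    intro D hD x hx y hy hSx
    intro D'' hD'' hyD''
    by_cases hDD : D'' = D
    · exact hDD ▸ hSx D hD hx
    · have hshared := (shared_pt hπ hD hD'' (fun e => hDD e.symm) hy hyD'').1
      rcases hshared with h | h
      · -- y = fmin D, so D'' is the parent of D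
        rw [← rootOf_parent hπ hD hD'' hDD (h ▸ hyD'')]
        exact hSx D hD hx
      · -- y = fmin D'', so D is the parent of D''
        rw [rootOf_parent hπ hD'' hD (fun e => hDD e.symm) (h ▸ hy)]
        exact hSx D hD hx
  have hSB : S (fmin B) := by
    intro D hD hmD
    rw [hsB D hD hmD]
    exact rootOf_self (fun E hE h => hsB E hE h)
  have hSC : S (fmin C) := (hinv _ _ hconn).mp hSB
  have := hSC C hC (fmin_mem hCne)
  rw [rootOf_self (fun E hE h => hsC E hE h)] at this
  exact hBC this.symm

/-- A singly covered block-minimum is the minimum of its component. -/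
lemma singly_min_comp {n : ℕ} {π : Finset (Finset ℕ)} (hπ : IsNCL n π) {A : Finset ℕ}
    (hA : A ∈ π) (hs : SinglyCovered π (fmin A)) :
    ∀ x, Conn π (fmin A) x → fmin A ≤ x := by
  have hne : A.Nonempty := hπ.1.1 A hA
  have hmA : fmin A ∈ A := fmin_mem hne
  intro x hx
  by_contra hcx
  push_neg at hcx
  have hmI : fmin A ∈ Finset.Icc 1 n := block_subset hπ hA hmA
  have hxI : x ∈ Finset.Icc 1 n := conn_Icc hπ hx hmI
  have hcompne : x ∈ comp n π (fmin A) := mem_comp.mpr ⟨hxI, hx⟩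
  have hwcomp : fmin (comp n π (fmin A)) ∈ comp n π (fmin A) := fmin_mem ⟨x, hcompne⟩
  have hwx : fmin (comp n π (fmin A)) ≤ x := fmin_le hcompne
  have hwconn : Conn π (fmin A) (fmin (comp n π (fmin A))) := (mem_comp.mp hwcomp).2
  obtain ⟨C, hC, hwC⟩ := hπ.1.2.2.1 _ (mem_comp.mp hwcomp).1
  have hsubcomp : ∀ D ∈ π, ∀ z ∈ D, Conn π (fmin A) z → ∀ z' ∈ D,
      z' ∈ comp n π (fmin A) := by
    intro D hD z hz hzconn z' hz'
    exact mem_comp.mpr ⟨block_subset hπ hD hz', conn_trans hzconn (conn_of_mem hD hz hz')⟩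
  have hfminC : fmin C = fmin (comp n π (fmin A)) := by
    refine fmin_eq_of hwC ?_
    intro z hz
    exact fmin_le (hsubcomp C hC _ hwC hwconn z hz)
  have hsC : ∀ D ∈ π, fmin (comp n π (fmin A)) ∈ D → D = C := by
    intro D hD hwD
    by_contra hDC
    have hfminD : fmin D = fmin (comp n π (fmin A)) := by
      refine fmin_eq_of hwD ?_
      intro z hz
      exact fmin_le (hsubcomp D hD _ hwD hwconn z hz)
    have := (shared_pt hπ hD hC hDC hwD hwC).2.1
    rw [hfminD, hfminC] at this
    exact this rfl
  have hsA : ∀ D ∈ π, fmin A ∈ D → D = A := fun D hD hmD => singly_unique hs hD hA hmD hmA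
  have hAC : A ≠ C := by
    intro e
    rw [← e] at hfminC
    omega
  exact two_singly hπ hA hC hAC hsA (hfminC ▸ hsC) (hfminC ▸ hwconn)

end NCLProof
namespace NCLProof

open Finset

/-! ### mapPart generics -/

lemma mem_mapPart {g : ℕ → ℕ} {α : Finset (Finset ℕ)} {V : Finset ℕ} :
    V ∈ mapPart g α ↔ ∃ U ∈ α, U.image g = V := by
  simp [mapPart, mem_image]

lemma mapPart_isPartition {F : Finset ℕ} {α : Finset (Finset ℕ)}
    (hp : IsPartitionOfSet F α) {g gi : ℕ → ℕ}
    (hg : ∀ x ∈ F, g x ∈ F) (hgi : ∀ x ∈ F, gi x ∈ F)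
    (hinv : ∀ x ∈ F, gi (g x) = x) (hinv2 : ∀ x ∈ F, g (gi x) = x) :
    IsPartitionOfSet F (mapPart g α) := by
  refine ⟨?_, ?_, ?_, ?_⟩
  · intro V hV
    obtain ⟨U, hU, rfl⟩ := mem_mapPart.mp hV
    exact (hp.1 U hU).image g
  · intro V hV
    obtain ⟨U, hU, rfl⟩ := mem_mapPart.mp hV
    intro x hx
    obtain ⟨u, hu, rfl⟩ := mem_image.mp hx
    exact hg u (hp.2.1 U hU hu)
  · intro m hm
    obtain ⟨U, hU, hmem⟩ := hp.2.2.1 (gi m) (hgi m hm)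
    exact ⟨U.image g, mem_mapPart.mpr ⟨U, hU, rfl⟩,
      mem_image.mpr ⟨gi m, hmem, hinv2 m hm⟩⟩
  · intro V hV W hW hne
    obtain ⟨U1, hU1, rfl⟩ := mem_mapPart.mp hV
    obtain ⟨U2, hU2, rfl⟩ := mem_mapPart.mp hW
    rw [Finset.eq_empty_iff_forall_notMem]
    intro x hx
    rw [mem_inter] at hx
    obtain ⟨u1, hu1, he1⟩ := mem_image.mp hx.1
    obtain ⟨u2, hu2, he2⟩ := mem_image.mp hx.2
    have hu1F : u1 ∈ F := hp.2.1 U1 hU1 hu1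
    have hu2F : u2 ∈ F := hp.2.1 U2 hU2 hu2
    have : u1 = u2 := by
      have := he1.trans he2.symm
      calc u1 = gi (g u1) := (hinv u1 hu1F).symm
        _ = gi (g u2) := by rw [this]
        _ = u2 := hinv u2 hu2F
    have hUeq : U1 = U2 := by
      by_contra hc
      have := hp.2.2.2 U1 hU1 U2 hU2 hc
      have : u1 ∈ U1 ∩ U2 := mem_inter.mpr ⟨hu1, ‹u1 = u2› ▸ hu2⟩
      rw [hp.2.2.2 U1 hU1 U2 hU2 hc] at this
      exact absurd this (notMem_empty _)
    exact hne (hUeq ▸ rfl)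

/-! ### unlink facts -/

lemma not_singly_of_doubly {π : Finset (Finset ℕ)} {m : ℕ} (h : DoublyCovered π m) :
    ¬ SinglyCovered π m := by
  unfold DoublyCovered at h
  unfold SinglyCovered
  omega

lemma doubly_pair {π : Finset (Finset ℕ)} {m : ℕ} (h : DoublyCovered π m) :
    ∃ A B : Finset ℕ, A ∈ π ∧ B ∈ π ∧ A ≠ B ∧ m ∈ A ∧ m ∈ B := by
  obtain ⟨A, B, hne, hAB⟩ := Finset.card_eq_two.mp h
  have hA : A ∈ π.filter (fun A => m ∈ A) := by rw [hAB]; simp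
  have hB : B ∈ π.filter (fun A => m ∈ A) := by rw [hAB]; simp
  rw [mem_filter] at hA hB
  exact ⟨A, B, hA.1, hB.1, hne, hA.2, hB.2⟩

noncomputable def uBlock (π : Finset (Finset ℕ)) (A : Finset ℕ) : Finset ℕ :=
  if SinglyCovered π (fmin A) then A else A.erase (fmin A)

lemma unlink_eq (π : Finset (Finset ℕ)) : unlink π = π.image (uBlock π) := rfl

lemma uBlock_subset {π : Finset (Finset ℕ)} {A : Finset ℕ} : uBlock π A ⊆ A := by
  rw [uBlock]
  split
  · exact Finset.Subset.refl A
  · exact erase_subset _ _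

lemma doubly_fmin_of_not_singly {n : ℕ} {π : Finset (Finset ℕ)} (hπ : IsNCL n π)
    {A : Finset ℕ} (hA : A ∈ π) (h : ¬ SinglyCovered π (fmin A)) :
    DoublyCovered π (fmin A) := by
  have hne : A.Nonempty := hπ.1.1 A hA
  rcases coverCount_cases hπ (block_subset hπ hA (fmin_mem hne)) with h' | h'
  · exact absurd h' h
  · exact h'

lemma uBlock_nonempty {n : ℕ} {π : Finset (Finset ℕ)} (hπ : IsNCL n π)
    {A : Finset ℕ} (hA : A ∈ π) : (uBlock π A).Nonempty := by
  rw [uBlock]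
  split
  · exact hπ.1.1 A hA
  · next h =>
    obtain ⟨B, C, hB, hC, hBC, hmB, hmC⟩ := doubly_pair (doubly_fmin_of_not_singly hπ hA h)
    have : A = B ∨ A ≠ B := em _
    have hcard : 2 ≤ A.card := by
      rcases this with rfl | hne
      · exact (shared_pt hπ hB hC hBC hmB hmC).2.2.1
      · exact (shared_pt hπ hA hB hne (fmin_mem (hπ.1.1 A hA)) hmB).2.2.1
    rw [← Finset.card_pos, Finset.card_erase_of_mem (fmin_mem (hπ.1.1 A hA))]
    omega

lemma uBlock_disjoint {n : ℕ} {π : Finset (Finset ℕ)} (hπ : IsNCL n π)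
    {A B : Finset ℕ} (hA : A ∈ π) (hB : B ∈ π) (hne : A ≠ B) :
    uBlock π A ∩ uBlock π B = ∅ := by
  rcases hπ.1.2.2.2 A hA B hB hne with h | h
  · rw [Finset.eq_empty_iff_forall_notMem]
    intro x hx
    rw [mem_inter] at hx
    have : x ∈ A ∩ B := mem_inter.mpr ⟨uBlock_subset hx.1, uBlock_subset hx.2⟩
    rw [h] at this
    exact absurd this (notMem_empty _)
  · obtain ⟨hcA, hcB, hcard, hfne, hpt⟩ := h
    rw [Finset.eq_empty_iff_forall_notMem]
    intro x hx
    rw [mem_inter] at hx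
    have hxAB : x ∈ A ∩ B := mem_inter.mpr ⟨uBlock_subset hx.1, uBlock_subset hx.2⟩
    have hxd : DoublyCovered π x :=
      doubly_of_two hπ hA hB hne (mem_inter.mp hxAB).1 (mem_inter.mp hxAB).2
    rcases hpt x hxAB with h' | h'
    · -- x = fmin A, so uBlock π A = A.erase (fmin A) ∌ x
      have : uBlock π A = A.erase (fmin A) := by
        rw [uBlock, if_neg (not_singly_of_doubly (h' ▸ hxd))]
      rw [this] at hx
      exact absurd h' (mem_erase.mp hx.1).1
    · have : uBlock π B = B.erase (fmin B) := by
        rw [uBlock, if_neg (not_singly_of_doubly (h' ▸ hxd))]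
      rw [this] at hx
      exact absurd h' (mem_erase.mp hx.2).1

lemma uBlock_inj {n : ℕ} {π : Finset (Finset ℕ)} (hπ : IsNCL n π)
    {A B : Finset ℕ} (hA : A ∈ π) (hB : B ∈ π) (h : uBlock π A = uBlock π B) : A = B := by
  by_contra hne
  obtain ⟨x, hx⟩ := uBlock_nonempty hπ hA
  have : x ∈ uBlock π A ∩ uBlock π B := mem_inter.mpr ⟨hx, h ▸ hx⟩
  rw [uBlock_disjoint hπ hA hB hne] at this
  exact absurd this (notMem_empty _)

lemma unlink_cover {n : ℕ} {π : Finset (Finset ℕ)} (hπ : IsNCL n π) {m : ℕ}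
    (hm : m ∈ Finset.Icc 1 n) : ∃ A ∈ π, m ∈ uBlock π A := by
  rcases coverCount_cases hπ hm with h | h
  · obtain ⟨A, hA, hmA⟩ := hπ.1.2.2.1 m hm
    refine ⟨A, hA, ?_⟩
    rw [uBlock]
    split
    · exact hmA
    · next h' =>
      refine mem_erase.mpr ⟨?_, hmA⟩
      intro e
      rw [← e] at h'
      exact h' h
  · obtain ⟨A, B, hA, hB, hne, hmA, hmB⟩ := doubly_pair h
    obtain ⟨e, hfne, -⟩ := shared_pt hπ hA hB hne hmA hmB
    rcases e with e | e
    · -- m = fmin A; m ≠ fmin B so m survives in uBlock π B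
      refine ⟨B, hB, ?_⟩
      rw [uBlock]
      split
      · exact hmB
      · exact mem_erase.mpr ⟨by omega, hmB⟩
    · refine ⟨A, hA, ?_⟩
      rw [uBlock]
      split
      · exact hmA
      · exact mem_erase.mpr ⟨by omega, hmA⟩

lemma unlink_isPartition {n : ℕ} {π : Finset (Finset ℕ)} (hπ : IsNCL n π) :
    IsPartitionOfSet (Finset.Icc 1 n) (unlink π) := by
  rw [unlink_eq]
  refine ⟨?_, ?_, ?_, ?_⟩
  · intro V hV
    obtain ⟨A, hA, rfl⟩ := mem_image.mp hV
    exact uBlock_nonempty hπ hA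
  · intro V hV
    obtain ⟨A, hA, rfl⟩ := mem_image.mp hV
    exact fun x hx => block_subset hπ hA (uBlock_subset hx)
  · intro m hm
    obtain ⟨A, hA, hmA⟩ := unlink_cover hπ hm
    exact ⟨uBlock π A, mem_image.mpr ⟨A, hA, rfl⟩, hmA⟩
  · intro V hV W hW hne
    obtain ⟨A, hA, rfl⟩ := mem_image.mp hV
    obtain ⟨B, hB, rfl⟩ := mem_image.mp hW
    exact uBlock_disjoint hπ hA hB (fun e => hne (e ▸ rfl))

lemma unlink_noncross {n : ℕ} {π : Finset (Finset ℕ)} (hπ : IsNCL n π) :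
    ¬ IsCrossing (unlink π) := by
  rintro ⟨U, hU, U', hU', hne, a, ha, b, hb, c, hc, d, hd, h1, h2, h3⟩
  rw [unlink_eq] at hU hU'
  obtain ⟨A, hA, rfl⟩ := mem_image.mp hU
  obtain ⟨B, hB, rfl⟩ := mem_image.mp hU'
  exact no_cross hπ.2 hA hB (fun e => hne (e ▸ rfl)) (uBlock_subset ha) (uBlock_subset hb)
    (uBlock_subset hc) (uBlock_subset hd) h1 h2 h3

end NCLProof
namespace NCLProof

open Finset

section CycUnlink

variable {n : ℕ} {π : Finset (Finset ℕ)}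

lemma genPart_isPartition (hπ : IsNCL n π) :
    IsPartitionOfSet (Finset.Icc 1 n) (genPart π) := (genPart_NC hπ).1

lemma cycUnlink_eq (π : Finset (Finset ℕ)) :
    cycUnlink π = mapPart (permOfInv (genPart π)) (unlink π) := rfl

lemma mem_genPart (hπ : IsNCL n π) {W : Finset ℕ} (hW : W ∈ genPart π) :
    ∃ m ∈ Finset.Icc 1 n, W = comp n π m := by
  rw [genPart_eq hπ] at hW
  obtain ⟨m, hm, rfl⟩ := mem_image.mp hW
  exact ⟨m, hm, rfl⟩

lemma comp_mem_genPart (hπ : IsNCL n π) {m : ℕ} (hm : m ∈ Finset.Icc 1 n) :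
    comp n π m ∈ genPart π := by
  rw [genPart_eq hπ]
  exact mem_image.mpr ⟨m, hm, rfl⟩

/-- Each unlinked block sits inside a single component. -/
lemma uBlock_subset_comp (hπ : IsNCL n π) {A : Finset ℕ} (hA : A ∈ π) {a : ℕ}
    (ha : a ∈ A) : uBlock π A ⊆ comp n π a :=
  fun x hx => block_subset_comp hπ hA ha (uBlock_subset hx)

lemma permOfInv_Icc (hπ : IsNCL n π) {x : ℕ} (hx : x ∈ Finset.Icc 1 n) :
    permOfInv (genPart π) x ∈ Finset.Icc 1 n := by
  obtain ⟨W, hW, hxW⟩ := (genPart_isPartition hπ).2.2.1 x hx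
  exact (genPart_isPartition hπ).2.1 W hW (permOfInv_mem (genPart_isPartition hπ) hW hxW)

lemma permOf_Icc (hπ : IsNCL n π) {x : ℕ} (hx : x ∈ Finset.Icc 1 n) :
    permOf (genPart π) x ∈ Finset.Icc 1 n := by
  obtain ⟨W, hW, hxW⟩ := (genPart_isPartition hπ).2.2.1 x hx
  exact (genPart_isPartition hπ).2.1 W hW (permOf_mem (genPart_isPartition hπ) hW hxW)

lemma cycUnlink_isPartition (hπ : IsNCL n π) :
    IsPartitionOfSet (Finset.Icc 1 n) (cycUnlink π) := by
  rw [cycUnlink_eq]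
  refine mapPart_isPartition (unlink_isPartition hπ) (fun x hx => permOfInv_Icc hπ hx)
    (fun x hx => permOf_Icc hπ hx) ?_ ?_
  · intro x hx
    obtain ⟨W, hW, hxW⟩ := (genPart_isPartition hπ).2.2.1 x hx
    exact permOf_permOfInv (genPart_isPartition hπ) hW hxW
  · intro x hx
    obtain ⟨W, hW, hxW⟩ := (genPart_isPartition hπ).2.2.1 x hx
    exact permOfInv_permOf (genPart_isPartition hπ) hW hxW

lemma cycUnlink_noncross (hπ : IsNCL n π) : ¬ IsCrossing (cycUnlink π) := by
  rintro ⟨V1, hV1, V2, hV2, hne, a, ha, b, hb, c, hc, d, hd, h1, h2, h3⟩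
  rw [cycUnlink_eq] at hV1 hV2
  obtain ⟨U1, hU1, rfl⟩ := mem_mapPart.mp hV1
  obtain ⟨U2, hU2, rfl⟩ := mem_mapPart.mp hV2
  have hβp := genPart_isPartition hπ
  -- components containing U1 and U2
  obtain ⟨a1, ha1⟩ := (unlink_isPartition hπ).1 U1 hU1
  obtain ⟨a2, ha2⟩ := (unlink_isPartition hπ).1 U2 hU2
  have ha1I : a1 ∈ Finset.Icc 1 n := (unlink_isPartition hπ).2.1 U1 hU1 ha1
  have ha2I : a2 ∈ Finset.Icc 1 n := (unlink_isPartition hπ).2.1 U2 hU2 ha2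
  rw [unlink_eq] at hU1 hU2
  obtain ⟨A1, hA1, rfl⟩ := mem_image.mp hU1
  obtain ⟨A2, hA2, rfl⟩ := mem_image.mp hU2
  set W1 := comp n π a1 with hW1
  set W2 := comp n π a2 with hW2
  have hW1g : W1 ∈ genPart π := comp_mem_genPart hπ ha1I
  have hW2g : W2 ∈ genPart π := comp_mem_genPart hπ ha2I
  have hsub1 : uBlock π A1 ⊆ W1 := uBlock_subset_comp hπ hA1 (uBlock_subset ha1)
  have hsub2 : uBlock π A2 ⊆ W2 := uBlock_subset_comp hπ hA2 (uBlock_subset ha2)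
  -- images stay in the same component
  have him1 : ∀ x ∈ (uBlock π A1).image (permOfInv (genPart π)), x ∈ W1 := by
    intro x hx
    obtain ⟨u, hu, rfl⟩ := mem_image.mp hx
    exact permOfInv_mem hβp hW1g (hsub1 hu)
  have him2 : ∀ x ∈ (uBlock π A2).image (permOfInv (genPart π)), x ∈ W2 := by
    intro x hx
    obtain ⟨u, hu, rfl⟩ := mem_image.mp hx
    exact permOfInv_mem hβp hW2g (hsub2 hu)
  by_cases hWeq : W1 = W2
  · -- same component: rotation argument
    rw [← hWeq] at hsub2 him2
    have hUne : uBlock π A1 ≠ uBlock π A2 := fun e => hne (e ▸ rfl)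
    have haW : a ∈ W1 := him1 a ha
    have hbW : b ∈ W1 := him2 b hb
    have hcW : c ∈ W1 := him1 c hc
    have hdW : d ∈ W1 := him2 d hd
    -- applying the cycle sends each point into its uBlock
    have hperm : ∀ x ∈ (uBlock π A1).image (permOfInv (genPart π)),
        nextInBlock W1 x ∈ uBlock π A1 := by
      intro x hx
      obtain ⟨u, hu, rfl⟩ := mem_image.mp hx
      have hxW : permOfInv (genPart π) u ∈ W1 := permOfInv_mem hβp hW1g (hsub1 hu)
      have : permOf (genPart π) (permOfInv (genPart π) u) = u :=
        permOf_permOfInv hβp hW1g (hsub1 hu)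
      rw [permOf_eq hβp hW1g hxW] at this
      rw [this]
      exact hu
    have hperm2 : ∀ x ∈ (uBlock π A2).image (permOfInv (genPart π)),
        nextInBlock W1 x ∈ uBlock π A2 := by
      intro x hx
      obtain ⟨u, hu, rfl⟩ := mem_image.mp hx
      have hxW : permOfInv (genPart π) u ∈ W1 := permOfInv_mem hβp hW1g (hsub2 hu)
      have : permOf (genPart π) (permOfInv (genPart π) u) = u :=
        permOf_permOfInv hβp hW1g (hsub2 hu)
      rw [permOf_eq hβp hW1g hxW] at this
      rw [this]
      exact hu
    have hPa := hperm a ha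
    have hPb := hperm2 b hb
    have hPc := hperm c hc
    have hPd := hperm2 d hd
    have hU1' : uBlock π A1 ∈ unlink π := by
      rw [unlink_eq]; exact mem_image.mpr ⟨A1, hA1, rfl⟩
    have hU2' : uBlock π A2 ∈ unlink π := by
      rw [unlink_eq]; exact mem_image.mpr ⟨A2, hA2, rfl⟩
    have hdmax' : d ≤ fmax W1 := le_fmax hdW
    have l1 : nextInBlock W1 a ≤ b := nextInBlock_le hbW h1
    have l2 : b < nextInBlock W1 b := lt_nextInBlock hbW (by omega)
    have l3 : nextInBlock W1 b ≤ c := nextInBlock_le hcW h2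
    have l4 : c < nextInBlock W1 c := lt_nextInBlock hcW (by omega)
    have l5 : nextInBlock W1 c ≤ d := nextInBlock_le hdW h3
    by_cases hdmax : d = fmax W1
    · rw [hdmax, nextInBlock_fmax] at hPd
      have m1 : fmin W1 ≤ a := fmin_le haW
      have m2 : a < nextInBlock W1 a := lt_nextInBlock haW (by omega)
      exact no_cross (unlink_noncross hπ) hU2' hU1' hUne.symm hPd hPa hPb hPc
        (by omega) (by omega) (by omega)
    · have l6 : d < nextInBlock W1 d := lt_nextInBlock hdW hdmax
      exact no_cross (unlink_noncross hπ) hU1' hU2' hUne hPa hPb hPc hPd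
        (by omega) (by omega) (by omega)
  · -- different components: crossing of genPart
    exact no_cross (genPart_NC hπ).2 hW1g hW2g hWeq (him1 a ha) (him2 b hb)
      (him1 c hc) (him2 d hd) h1 h2 h3

lemma cycUnlink_NC (hπ : IsNCL n π) : IsNCPartition n (cycUnlink π) :=
  ⟨cycUnlink_isPartition hπ, cycUnlink_noncross hπ⟩

lemma genPart_NC' (hπ : IsNCL n π) : IsNCPartition n (genPart π) := genPart_NC hπ

/-- The minimum of a component is singly covered, its block has min = fmin W,
and the successor of fmin W in W belongs to that block. -/
lemma comp_min_block (hπ : IsNCL n π) {m0 : ℕ} (hm0 : m0 ∈ Finset.Icc 1 n) :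
    ∃ A ∈ π, fmin (comp n π m0) ∈ A ∧ SinglyCovered π (fmin A) ∧
      fmin A = fmin (comp n π m0) ∧ nextInBlock (comp n π m0) (fmin (comp n π m0)) ∈ A := by
  set W := comp n π m0 with hWdef
  have hWne : W.Nonempty := ⟨m0, self_mem_comp hm0⟩
  have hmW : fmin W ∈ W := fmin_mem hWne
  have hmWI : fmin W ∈ Finset.Icc 1 n := (mem_comp.mp hmW).1
  have hconnW : ∀ z ∈ W, Conn π (fmin W) z := by
    intro z hz
    exact conn_trans (conn_symm (mem_comp.mp hmW).2) (mem_comp.mp hz).2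
  obtain ⟨A, hA, hmA⟩ := hπ.1.2.2.1 _ hmWI
  have hblocksub : ∀ D ∈ π, fmin W ∈ D → D ⊆ W := by
    intro D hD hmD z hz
    exact mem_comp.mpr ⟨block_subset hπ hD hz,
      conn_trans (mem_comp.mp hmW).2 (conn_of_mem hD hmD hz)⟩
  have hfminA : fmin A = fmin W := by
    refine fmin_eq_of hmA ?_
    intro z hz
    exact fmin_le (hblocksub A hA hmA hz)
  have hsingle : SinglyCovered π (fmin A) := by
    rcases coverCount_cases hπ (m := fmin A) (by rw [hfminA]; exact hmWI) with h | h
    · exact h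
    · exfalso
      obtain ⟨B, C, hB, hC, hBC, hmB, hmC⟩ := doubly_pair h
      have hfB : fmin B = fmin W := by
        refine fmin_eq_of (hfminA ▸ hmB) ?_
        intro z hz
        exact fmin_le (hblocksub B hB (hfminA ▸ hmB) hz)
      have hfC : fmin C = fmin W := by
        refine fmin_eq_of (hfminA ▸ hmC) ?_
        intro z hz
        exact fmin_le (hblocksub C hC (hfminA ▸ hmC) hz)
      have := (shared_pt hπ hB hC hBC hmB hmC).2.1
      omega
  refine ⟨A, hA, hmA, hsingle, hfminA, ?_⟩
  -- the successor of fmin W in W lies in A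
  by_cases hsing : fmin W = fmax W
  · rw [hsing, nextInBlock_fmax]
    exact hmA
  · have hnext : nextInBlock W (fmin W) ∈ W := nextInBlock_mem hmW
    have hlt : fmin W < nextInBlock W (fmin W) := lt_nextInBlock hmW hsing
    -- A is not the singleton {fmin W}
    have hAer : (A.erase (fmin A)).Nonempty := by
      rcases Finset.eq_empty_or_nonempty (A.erase (fmin A)) with h | h
      · exfalso
        have hAeq : A = {fmin W} := by
          apply Finset.Subset.antisymm
          · intro z hz
            rw [mem_singleton]
            by_contra hzne
            exact absurd (mem_erase.mpr ⟨fun e => hzne (by rw [e, hfminA]), hz⟩)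
              (h ▸ notMem_empty z)
          · intro z hz
            rw [mem_singleton] at hz
            exact hz ▸ hmA
        have : nextInBlock W (fmin W) = fmin W := by
          refine comp_singleton ?_ _ (hconnW _ hnext)
          intro C hC hmC
          rw [singly_unique hsingle hC hA (hfminA ▸ hmC) (hfminA ▸ hmA), hAeq]
        omega
      · exact h
    have hgap := gap hπ hA hAer (x := nextInBlock W (fmin W))
      (by rw [hfminA]; exact hconnW _ hnext) (by omega)
    have ha2A : fmin (A.erase (fmin A)) ∈ A := (mem_erase.mp (fmin_mem hAer)).2
    have ha2W : fmin (A.erase (fmin A)) ∈ W := hblocksub A hA hmA ha2A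
    have ha2gt : fmin W < fmin (A.erase (fmin A)) := by
      have h1 : fmin A ≤ fmin (A.erase (fmin A)) := fmin_le ha2A
      have h2 : fmin A ≠ fmin (A.erase (fmin A)) :=
        fun e => (mem_erase.mp (fmin_mem hAer)).1 e.symm
      omega
    have hle : nextInBlock W (fmin W) ≤ fmin (A.erase (fmin A)) :=
      nextInBlock_le ha2W ha2gt
    have : nextInBlock W (fmin W) = fmin (A.erase (fmin A)) := by omega
    rw [this]
    exact ha2A

lemma cycUnlink_LL (hπ : IsNCL n π) : LL (cycUnlink π) (genPart π) := by
  have hβp := genPart_isPartition hπ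
  constructor
  · -- refines
    intro V hV
    rw [cycUnlink_eq] at hV
    obtain ⟨U, hU, rfl⟩ := mem_mapPart.mp hV
    obtain ⟨a0, ha0⟩ := (unlink_isPartition hπ).1 U hU
    have ha0I : a0 ∈ Finset.Icc 1 n := (unlink_isPartition hπ).2.1 U hU ha0
    rw [unlink_eq] at hU
    obtain ⟨A, hA, rfl⟩ := mem_image.mp hU
    refine ⟨comp n π a0, comp_mem_genPart hπ ha0I, ?_⟩
    intro x hx
    obtain ⟨u, hu, rfl⟩ := mem_image.mp hx
    exact permOfInv_mem hβp (comp_mem_genPart hπ ha0I)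
      (uBlock_subset_comp hπ hA (uBlock_subset ha0) hu)
  · -- min/max condition
    intro W hW
    obtain ⟨m0, hm0, rfl⟩ := mem_genPart hπ hW
    obtain ⟨A, hA, hmA, hsingle, hfminA, hnextA⟩ := comp_min_block hπ hm0
    set W := comp n π m0 with hWdef
    have hWg : W ∈ genPart π := comp_mem_genPart hπ hm0
    have hWne : W.Nonempty := ⟨m0, self_mem_comp hm0⟩
    have hmW : fmin W ∈ W := fmin_mem hWne
    have hUA : uBlock π A = A := by rw [uBlock, if_pos hsingle]
    have hAmem : A ∈ unlink π := by
      rw [unlink_eq]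
      exact mem_image.mpr ⟨A, hA, hUA⟩
    refine ⟨A.image (permOfInv (genPart π)), ?_, ?_, ?_⟩
    · rw [cycUnlink_eq]
      exact mem_mapPart.mpr ⟨A, hAmem, rfl⟩
    · -- fmin W in the image
      refine mem_image.mpr ⟨nextInBlock W (fmin W), hnextA, ?_⟩
      have hnW : nextInBlock W (fmin W) ∈ W := nextInBlock_mem hmW
      rw [permOfInv_eq hβp hWg hnW]
      exact prevInBlock_nextInBlock hmW
    · -- fmax W in the image
      refine mem_image.mpr ⟨fmin W, hmA, ?_⟩
      rw [permOfInv_eq hβp hWg hmW]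
      exact prevInBlock_fmin W

end CycUnlink

end NCLProof
namespace NCLProof

open Finset

noncomputable def psiBlock (β : Finset (Finset ℕ)) (V : Finset ℕ) : Finset ℕ :=
  if fmax (blockOf β (fmin V)) ∈ V then V.image (permOf β)
  else insert (fmin V) (V.image (permOf β))

noncomputable def psi (α β : Finset (Finset ℕ)) : Finset (Finset ℕ) :=
  α.image (psiBlock β)

section PsiF

variable {n : ℕ} {π : Finset (Finset ℕ)}

lemma psi_block (hπ : IsNCL n π) {A : Finset ℕ} (hA : A ∈ π) :
    psiBlock (genPart π) ((uBlock π A).image (permOfInv (genPart π))) = A := by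
  have hβp := genPart_isPartition hπ
  have hane : A.Nonempty := hπ.1.1 A hA
  obtain ⟨a0, ha0⟩ := hπ.1.1 A hA
  have ha0I : a0 ∈ Finset.Icc 1 n := block_subset hπ hA ha0
  have hWg : comp n π a0 ∈ genPart π := comp_mem_genPart hπ ha0I
  have hAW : A ⊆ comp n π a0 := block_subset_comp hπ hA ha0
  have hVsub : (uBlock π A).image (permOfInv (genPart π)) ⊆ comp n π a0 := by
    intro x hx
    obtain ⟨u, hu, rfl⟩ := mem_image.mp hx
    exact permOfInv_mem hβp hWg (hAW (uBlock_subset hu))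
  have hVne : ((uBlock π A).image (permOfInv (genPart π))).Nonempty :=
    (uBlock_nonempty hπ hA).image _
  have hblockOf : blockOf (genPart π) (fmin ((uBlock π A).image (permOfInv (genPart π)))) =
      comp n π a0 := blockOf_eq hβp hWg (hVsub (fmin_mem hVne))
  have hconnW : ∀ z ∈ comp n π a0, Conn π (fmin A) z := by
    intro z hz
    exact conn_trans (conn_symm (mem_comp.mp (hAW (fmin_mem hane))).2) (mem_comp.mp hz).2
  by_cases hsing : SinglyCovered π (fmin A)
  · -- singly covered: uBlock π A = A and fmin A = fmin W
    have hU : uBlock π A = A := if_pos hsing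
    have hfminWA : fmin (comp n π a0) = fmin A := by
      refine fmin_eq_of (hAW (fmin_mem hane)) ?_
      intro z hz
      exact singly_min_comp hπ hA hsing z (hconnW z hz)
    have hmaxV : fmax (comp n π a0) ∈ (uBlock π A).image (permOfInv (genPart π)) := by
      refine mem_image.mpr ⟨fmin A, by rw [hU]; exact fmin_mem hane, ?_⟩
      rw [permOfInv_eq hβp hWg (hAW (fmin_mem hane)), ← hfminWA]
      exact prevInBlock_fmin _
    rw [psiBlock, hblockOf, if_pos hmaxV, hU, Finset.image_image]
    refine Eq.trans (Finset.image_congr ?_) Finset.image_id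
    intro x hx
    exact permOf_permOfInv hβp hWg (hAW hx)
  · -- doubly covered: uBlock π A = A.erase (fmin A)
    have hU : uBlock π A = A.erase (fmin A) := if_neg hsing
    have hAer : (A.erase (fmin A)).Nonempty := by
      have := uBlock_nonempty hπ hA
      rwa [hU] at this
    have ha2A : fmin (A.erase (fmin A)) ∈ A := (mem_erase.mp (fmin_mem hAer)).2
    have hma2 : fmin A < fmin (A.erase (fmin A)) := by
      have h1 : fmin A ≤ fmin (A.erase (fmin A)) := fmin_le ha2A
      have h2 : fmin (A.erase (fmin A)) ≠ fmin A := (mem_erase.mp (fmin_mem hAer)).1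
      omega
    have hmWmem : fmin A ∈ comp n π a0 := hAW (fmin_mem hane)
    have ha2W : fmin (A.erase (fmin A)) ∈ comp n π a0 := hAW ha2A
    have hnext : nextInBlock (comp n π a0) (fmin A) = fmin (A.erase (fmin A)) := by
      have hle : nextInBlock (comp n π a0) (fmin A) ≤ fmin (A.erase (fmin A)) :=
        nextInBlock_le ha2W hma2
      have hfmaxne : fmin A ≠ fmax (comp n π a0) := by
        have := le_fmax ha2W
        omega
      have hlt : fmin A < nextInBlock (comp n π a0) (fmin A) :=
        lt_nextInBlock hmWmem hfmaxne
      have hmem : nextInBlock (comp n π a0) (fmin A) ∈ comp n π a0 :=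
        nextInBlock_mem hmWmem
      have hge := gap hπ hA hAer (hconnW _ hmem) hlt
      omega
    have hprev : prevInBlock (comp n π a0) (fmin (A.erase (fmin A))) = fmin A := by
      rw [← hnext]
      exact prevInBlock_nextInBlock hmWmem
    have hmV : fmin A ∈ (uBlock π A).image (permOfInv (genPart π)) := by
      refine mem_image.mpr ⟨fmin (A.erase (fmin A)), by rw [hU]; exact fmin_mem hAer, ?_⟩
      rw [permOfInv_eq hβp hWg ha2W]
      exact hprev
    have hfminV : fmin ((uBlock π A).image (permOfInv (genPart π))) = fmin A := by
      refine fmin_eq_of hmV ?_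
      intro x hx
      obtain ⟨u, hu, rfl⟩ := mem_image.mp hx
      rw [hU] at hu
      have huW : u ∈ comp n π a0 := hAW (mem_erase.mp hu).2
      have hugt : fmin A < u := by
        have := fmin_le hu
        omega
      rw [permOfInv_eq hβp hWg huW]
      exact le_prevInBlock hmWmem hugt
    have htest : fmax (comp n π a0) ∉ (uBlock π A).image (permOfInv (genPart π)) := by
      rintro hmem
      obtain ⟨u, hu, he⟩ := mem_image.mp hmem
      rw [hU] at hu
      have huW : u ∈ comp n π a0 := hAW (mem_erase.mp hu).2
      rw [permOfInv_eq hβp hWg huW] at he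
      have hu' : u = fmin (comp n π a0) := by
        have := nextInBlock_prevInBlock huW
        rw [he, nextInBlock_fmax] at this
        exact this.symm
      have h1 : fmin (comp n π a0) ≤ fmin A := fmin_le hmWmem
      have h2 : fmin (A.erase (fmin A)) ≤ u := fmin_le hu
      omega
    rw [psiBlock, hblockOf, if_neg htest, hfminV, hU, Finset.image_image]
    have : (A.erase (fmin A)).image ((permOf (genPart π)) ∘ (permOfInv (genPart π))) =
        A.erase (fmin A) := by
      refine Eq.trans (Finset.image_congr ?_) Finset.image_id
      intro x hx
      exact permOf_permOfInv hβp hWg (hAW (mem_erase.mp hx).2)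
    rw [this]
    exact Finset.insert_erase (fmin_mem hane)

theorem psi_f (hπ : IsNCL n π) : psi (cycUnlink π) (genPart π) = π := by
  rw [psi, cycUnlink_eq, mapPart, unlink_eq, Finset.image_image, Finset.image_image]
  refine Eq.trans (Finset.image_congr ?_) Finset.image_id
  intro A hA
  exact psi_block hπ hA

end PsiF

end NCLProof
namespace NCLProof

open Finset

section PsiSide

variable {n : ℕ} {α β : Finset (Finset ℕ)}

/-- The β-block containing an α-block. -/
lemma WV_spec (hα : IsNCPartition n α) (hβ : IsNCPartition n β) (hLL : LL α β)
    {V : Finset ℕ} (hV : V ∈ α) :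
    blockOf β (fmin V) ∈ β ∧ V ⊆ blockOf β (fmin V) := by
  obtain ⟨W, hW, hsub⟩ := hLL.1 V hV
  have : blockOf β (fmin V) = W := blockOf_eq hβ.1 hW (hsub (fmin_mem (hα.1.1 V hV)))
  rw [this]
  exact ⟨hW, hsub⟩

lemma beta_disjoint (hβ : IsNCPartition n β) {W W' : Finset ℕ} (hW : W ∈ β) (hW' : W' ∈ β)
    {x : ℕ} (hx : x ∈ W) (hx' : x ∈ W') : W = W' := part_disjoint hβ.1 hW hW' hx hx'

lemma alpha_disjoint (hα : IsNCPartition n α) {V V' : Finset ℕ} (hV : V ∈ α) (hV' : V' ∈ α)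
    {x : ℕ} (hx : x ∈ V) (hx' : x ∈ V') : V = V' := part_disjoint hα.1 hV hV' hx hx'

/-- `fmax W ∈ V ↔ fmin W ∈ V` for the β-block `W` of `V`. -/
lemma special_iff (hα : IsNCPartition n α) (hβ : IsNCPartition n β) (hLL : LL α β)
    {V : Finset ℕ} (hV : V ∈ α) :
    fmax (blockOf β (fmin V)) ∈ V ↔ fmin (blockOf β (fmin V)) ∈ V := by
  obtain ⟨hWβ, hVW⟩ := WV_spec hα hβ hLL hV
  set W := blockOf β (fmin V) with hWdef
  obtain ⟨V₀, hV₀, hminV₀, hmaxV₀⟩ := hLL.2 _ hWβ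
  constructor
  · intro h
    exact (alpha_disjoint hα hV₀ hV hmaxV₀ h) ▸ hminV₀
  · intro h
    exact (alpha_disjoint hα hV₀ hV hminV₀ h) ▸ hmaxV₀

lemma PV_subset (hα : IsNCPartition n α) (hβ : IsNCPartition n β) (hLL : LL α β)
    {V : Finset ℕ} (hV : V ∈ α) : V.image (permOf β) ⊆ blockOf β (fmin V) := by
  obtain ⟨hWβ, hVW⟩ := WV_spec hα hβ hLL hV
  intro x hx
  obtain ⟨v, hv, rfl⟩ := mem_image.mp hx
  exact permOf_mem hβ.1 hWβ (hVW hv)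

lemma psiBlock_subset (hα : IsNCPartition n α) (hβ : IsNCPartition n β) (hLL : LL α β)
    {V : Finset ℕ} (hV : V ∈ α) : psiBlock β V ⊆ blockOf β (fmin V) := by
  obtain ⟨hWβ, hVW⟩ := WV_spec hα hβ hLL hV
  rw [psiBlock]
  split
  · exact PV_subset hα hβ hLL hV
  · intro x hx
    rcases mem_insert.mp hx with rfl | hx'
    · exact hVW (fmin_mem (hα.1.1 V hV))
    · exact PV_subset hα hβ hLL hV hx'

lemma fminW_lt_fminV (hα : IsNCPartition n α) (hβ : IsNCPartition n β) (hLL : LL α β)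
    {V : Finset ℕ} (hV : V ∈ α) (hns : fmax (blockOf β (fmin V)) ∉ V) :
    fmin (blockOf β (fmin V)) < fmin V := by
  obtain ⟨hWβ, hVW⟩ := WV_spec hα hβ hLL hV
  have hsp := special_iff hα hβ hLL hV
  set W := blockOf β (fmin V) with hWdef
  have h1 : fmin W ≤ fmin V := fmin_le (hVW (fmin_mem (hα.1.1 V hV)))
  have h2 : fmin W ∉ V := fun h => hns (hsp.mpr h)
  have h3 : fmin W ≠ fmin V := fun e => h2 (by rw [e]; exact fmin_mem (hα.1.1 V hV))
  omega

lemma mem_PV_gt (hα : IsNCPartition n α) (hβ : IsNCPartition n β) (hLL : LL α β)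
    {V : Finset ℕ} (hV : V ∈ α) (hns : fmax (blockOf β (fmin V)) ∉ V)
    {x : ℕ} (hx : x ∈ V.image (permOf β)) : fmin V < x := by
  obtain ⟨hWβ, hVW⟩ := WV_spec hα hβ hLL hV
  obtain ⟨v, hv, rfl⟩ := mem_image.mp hx
  rw [permOf_eq hβ.1 hWβ (hVW hv)]
  have hvne : v ≠ fmax (blockOf β (fmin V)) := fun e => hns (e ▸ hv)
  have := lt_nextInBlock (hVW hv) hvne
  have := fmin_le hv
  omega

lemma fminV_notin_PV (hα : IsNCPartition n α) (hβ : IsNCPartition n β) (hLL : LL α β)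
    {V : Finset ℕ} (hV : V ∈ α) (hns : fmax (blockOf β (fmin V)) ∉ V) :
    fmin V ∉ V.image (permOf β) := fun h => absurd (mem_PV_gt hα hβ hLL hV hns h) (lt_irrefl _)

lemma psiBlock_nonspecial (hα : IsNCPartition n α) (hβ : IsNCPartition n β) (hLL : LL α β)
    {V : Finset ℕ} (hV : V ∈ α) (hns : fmax (blockOf β (fmin V)) ∉ V) :
    psiBlock β V = insert (fmin V) (V.image (permOf β)) := by
  rw [psiBlock, if_neg hns]

lemma psiBlock_special (hα : IsNCPartition n α) (hβ : IsNCPartition n β) (hLL : LL α β)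
    {V : Finset ℕ} (hV : V ∈ α) (hs : fmax (blockOf β (fmin V)) ∈ V) :
    psiBlock β V = V.image (permOf β) := by
  rw [psiBlock, if_pos hs]

lemma fmin_psiBlock_nonspecial (hα : IsNCPartition n α) (hβ : IsNCPartition n β)
    (hLL : LL α β) {V : Finset ℕ} (hV : V ∈ α) (hns : fmax (blockOf β (fmin V)) ∉ V) :
    fmin (psiBlock β V) = fmin V := by
  rw [psiBlock_nonspecial hα hβ hLL hV hns]
  refine fmin_eq_of (mem_insert_self _ _) ?_
  intro x hx
  rcases mem_insert.mp hx with rfl | hx'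
  · exact le_refl _
  · exact le_of_lt (mem_PV_gt hα hβ hLL hV hns hx')

lemma fminW_mem_PV_special (hα : IsNCPartition n α) (hβ : IsNCPartition n β) (hLL : LL α β)
    {V : Finset ℕ} (hV : V ∈ α) (hs : fmax (blockOf β (fmin V)) ∈ V) :
    fmin (blockOf β (fmin V)) ∈ V.image (permOf β) := by
  obtain ⟨hWβ, hVW⟩ := WV_spec hα hβ hLL hV
  refine mem_image.mpr ⟨fmax (blockOf β (fmin V)), hs, ?_⟩
  rw [permOf_eq hβ.1 hWβ (hVW hs)]
  exact nextInBlock_fmax _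

lemma fmin_psiBlock_special (hα : IsNCPartition n α) (hβ : IsNCPartition n β) (hLL : LL α β)
    {V : Finset ℕ} (hV : V ∈ α) (hs : fmax (blockOf β (fmin V)) ∈ V) :
    fmin (psiBlock β V) = fmin (blockOf β (fmin V)) := by
  rw [psiBlock_special hα hβ hLL hV hs]
  refine fmin_eq_of (fminW_mem_PV_special hα hβ hLL hV hs) ?_
  intro x hx
  exact fmin_le (PV_subset hα hβ hLL hV hx)

/-- Membership in `psiBlock` decomposes. -/
lemma mem_psiBlock_cases {V : Finset ℕ} {x : ℕ} (hx : x ∈ psiBlock β V) :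
    x ∈ V.image (permOf β) ∨ (fmax (blockOf β (fmin V)) ∉ V ∧ x = fmin V) := by
  rw [psiBlock] at hx
  split at hx
  · exact Or.inl hx
  · next h =>
    rcases mem_insert.mp hx with rfl | hx'
    · exact Or.inr ⟨h, rfl⟩
    · exact Or.inl hx'

/-- Images of distinct α-blocks under the cycles are disjoint. -/
lemma PV_images_disjoint (hα : IsNCPartition n α) (hβ : IsNCPartition n β) (hLL : LL α β)
    {V V' : Finset ℕ} (hV : V ∈ α) (hV' : V' ∈ α) (hne : V ≠ V') {x : ℕ}
    (hx : x ∈ V.image (permOf β)) (hx' : x ∈ V'.image (permOf β)) : False := by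
  obtain ⟨hWβ, hVW⟩ := WV_spec hα hβ hLL hV
  obtain ⟨hWβ', hVW'⟩ := WV_spec hα hβ hLL hV'
  have hWW : blockOf β (fmin V) = blockOf β (fmin V') :=
    beta_disjoint hβ hWβ hWβ' (PV_subset hα hβ hLL hV hx) (PV_subset hα hβ hLL hV' hx')
  obtain ⟨v, hv, he⟩ := mem_image.mp hx
  obtain ⟨v', hv', he'⟩ := mem_image.mp hx'
  have : v = v' := by
    have h1 : permOfInv β (permOf β v) = v := permOfInv_permOf hβ.1 hWβ (hVW hv)
    have h2 : permOfInv β (permOf β v') = v' := permOfInv_permOf hβ.1 hWβ' (hVW' hv')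
    rw [he] at h1
    rw [he'] at h2
    rw [← h1, ← h2]
  exact hne (alpha_disjoint hα hV hV' hv (this ▸ hv'))

/-- If `fmin V` lies in the cycled image of another block, then `V` is non-special and
its minimum dominates the other block's minimum. -/
lemma cross_mem (hα : IsNCPartition n α) (hβ : IsNCPartition n β) (hLL : LL α β)
    {V V' : Finset ℕ} (hV : V ∈ α) (hV' : V' ∈ α) (hne : V ≠ V')
    (h : fmin V ∈ V'.image (permOf β)) :
    fmax (blockOf β (fmin V)) ∉ V ∧ fmin V' < fmin V ∧
      prevInBlock (blockOf β (fmin V)) (fmin V) ∈ V' := by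
  obtain ⟨hWβ, hVW⟩ := WV_spec hα hβ hLL hV
  obtain ⟨hWβ', hVW'⟩ := WV_spec hα hβ hLL hV'
  have hsp := special_iff hα hβ hLL hV
  have hlt0 := fminW_lt_fminV hα hβ hLL hV
  have hPVsub := PV_subset hα hβ hLL hV'
  set W := blockOf β (fmin V) with hWdef
  have hWW : blockOf β (fmin V') = W :=
    beta_disjoint hβ hWβ' hWβ (hPVsub h) (hVW (fmin_mem (hα.1.1 V hV)))
  obtain ⟨v', hv', he⟩ := mem_image.mp h
  have hv'W : v' ∈ W := hWW ▸ hVW' hv'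
  rw [permOf_eq hβ.1 hWβ hv'W] at he
  have hprev : prevInBlock W (fmin V) = v' := by
    have h0 := prevInBlock_nextInBlock hv'W
    rw [he] at h0
    exact h0
  have hns : fmax W ∉ V := by
    intro hs
    have hfminWV : fmin V = fmin W := by
      have h1 := fmin_le (hsp.mp hs)
      have h2 := fmin_le (hVW (fmin_mem (hα.1.1 V hV)))
      omega
    have hv'max : v' = fmax W := by
      rw [← hprev, hfminWV]
      exact prevInBlock_fmin _
    exact hne (alpha_disjoint hα hV hV' hs (hv'max ▸ hv'))
  have hfneq : fmin V ≠ fmin W := by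
    have := hlt0 hns
    omega
  have hlt : v' < fmin V := by
    rw [← hprev]
    exact prevInBlock_lt (hVW (fmin_mem (hα.1.1 V hV))) hfneq
  have := fmin_le hv'
  exact ⟨hns, by omega, hprev ▸ hv'⟩

end PsiSide

end NCLProof
namespace NCLProof

open Finset

section PsiNCL

variable {n : ℕ} {α β : Finset (Finset ℕ)}

lemma PV_subset_psiBlock {V : Finset ℕ} : V.image (permOf β) ⊆ psiBlock β V := by
  rw [psiBlock]
  split
  · exact Finset.Subset.refl _
  · exact subset_insert _ _

lemma psiBlock_nonempty (hα : IsNCPartition n α) {V : Finset ℕ} (hV : V ∈ α) :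
    (psiBlock β V).Nonempty := by
  obtain ⟨v, hv⟩ := hα.1.1 V hV
  exact ⟨permOf β v, PV_subset_psiBlock (mem_image.mpr ⟨v, hv, rfl⟩)⟩

lemma psiBlock_inter_cases (hα : IsNCPartition n α) (hβ : IsNCPartition n β) (hLL : LL α β)
    {V V' : Finset ℕ} (hV : V ∈ α) (hV' : V' ∈ α) (hne : V ≠ V') {x : ℕ}
    (hx : x ∈ psiBlock β V) (hx' : x ∈ psiBlock β V') :
    (x = fmin V ∧ fmin V' < fmin V) ∨ (x = fmin V' ∧ fmin V < fmin V') := by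
  rcases mem_psiBlock_cases hx with h1 | ⟨hns1, rfl⟩
  · rcases mem_psiBlock_cases hx' with h2 | ⟨hns2, rfl⟩
    · exact absurd (PV_images_disjoint hα hβ hLL hV hV' hne h1 h2) id
    · exact Or.inr ⟨rfl, (cross_mem hα hβ hLL hV' hV hne.symm h1).2.1⟩
  · rcases mem_psiBlock_cases hx' with h2 | ⟨hns2, he⟩
    · exact Or.inl ⟨rfl, (cross_mem hα hβ hLL hV hV' hne h2).2.1⟩
    · exfalso
      exact hne (alpha_disjoint hα hV hV' (fmin_mem (hα.1.1 V hV))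
        (he ▸ fmin_mem (hα.1.1 V' hV')))

lemma card2_nonspecial (hα : IsNCPartition n α) (hβ : IsNCPartition n β) (hLL : LL α β)
    {V : Finset ℕ} (hV : V ∈ α) (hns : fmax (blockOf β (fmin V)) ∉ V) :
    2 ≤ (psiBlock β V).card := by
  rw [psiBlock_nonspecial hα hβ hLL hV hns,
    Finset.card_insert_of_notMem (fminV_notin_PV hα hβ hLL hV hns)]
  have : (V.image (permOf β)).Nonempty := ((hα.1.1 V hV).image _)
  have := Finset.card_pos.mpr this
  omega

lemma permOf_injOn (hβ : IsNCPartition n β) {W : Finset ℕ} (hW : W ∈ β) {V : Finset ℕ}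
    (hVW : V ⊆ W) : (V.image (permOf β)).card = V.card := by
  refine Finset.card_image_of_injOn ?_
  intro x hx y hy he
  have h1 := permOfInv_permOf hβ.1 hW (hVW hx)
  have h2 := permOfInv_permOf hβ.1 hW (hVW hy)
  rw [← h1, ← h2, he]

lemma W_nontrivial (hα : IsNCPartition n α) (hβ : IsNCPartition n β) (hLL : LL α β)
    {V V' : Finset ℕ} (hV : V ∈ α) (hV' : V' ∈ α) (hne : V ≠ V')
    (hW : blockOf β (fmin V) = blockOf β (fmin V')) :
    fmin (blockOf β (fmin V)) ≠ fmax (blockOf β (fmin V)) := by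
  obtain ⟨hWβ, hVW⟩ := WV_spec hα hβ hLL hV
  obtain ⟨hWβ', hVW'⟩ := WV_spec hα hβ hLL hV'
  obtain ⟨v, hv⟩ := hα.1.1 V hV
  obtain ⟨v', hv'⟩ := hα.1.1 V' hV'
  intro he
  have hvW : v ∈ blockOf β (fmin V) := hVW hv
  have hv'W : v' ∈ blockOf β (fmin V) := hW ▸ hVW' hv'
  have h1 : v = fmin (blockOf β (fmin V)) := by
    have := fmin_le hvW
    have := le_fmax hvW
    omega
  have h2 : v' = fmin (blockOf β (fmin V)) := by
    have := fmin_le hv'W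
    have := le_fmax hv'W
    omega
  exact hne (alpha_disjoint hα hV hV' hv (by rw [h1, ← h2]; exact hv'))

lemma card2_special (hα : IsNCPartition n α) (hβ : IsNCPartition n β) (hLL : LL α β)
    {V : Finset ℕ} (hV : V ∈ α) (hs : fmax (blockOf β (fmin V)) ∈ V)
    (hWne : fmin (blockOf β (fmin V)) ≠ fmax (blockOf β (fmin V))) :
    2 ≤ (psiBlock β V).card := by
  obtain ⟨hWβ, hVW⟩ := WV_spec hα hβ hLL hV
  rw [psiBlock_special hα hβ hLL hV hs, permOf_injOn hβ hWβ hVW]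
  have h1 : fmin (blockOf β (fmin V)) ∈ V := (special_iff hα hβ hLL hV).mp hs
  exact Finset.one_lt_card.mpr ⟨_, h1, _, hs, hWne⟩

/-- The full linked-intersection property for a pair of ψ-blocks over the same β-block. -/
lemma psiBlock_pair (hα : IsNCPartition n α) (hβ : IsNCPartition n β) (hLL : LL α β)
    {V V' : Finset ℕ} (hV : V ∈ α) (hV' : V' ∈ α) (hne : V ≠ V')
    (hW : blockOf β (fmin V) = blockOf β (fmin V'))
    (hint : fmin V ∈ psiBlock β V ∩ psiBlock β V') :
    2 ≤ (psiBlock β V).card ∧ 2 ≤ (psiBlock β V').card ∧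
      (psiBlock β V ∩ psiBlock β V').card = 1 ∧
      fmin (psiBlock β V) ≠ fmin (psiBlock β V') ∧
      ∀ x ∈ psiBlock β V ∩ psiBlock β V',
        x = fmin (psiBlock β V) ∨ x = fmin (psiBlock β V') := by
  rw [mem_inter] at hint
  -- fmin V lies in PV'
  have hfPV' : fmin V ∈ V'.image (permOf β) := by
    rcases mem_psiBlock_cases hint.2 with h | ⟨_, he⟩
    · exact h
    · exact absurd (alpha_disjoint hα hV hV' (fmin_mem (hα.1.1 V hV))
        (he ▸ fmin_mem (hα.1.1 V' hV'))) hne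
  obtain ⟨hns, hlt, -⟩ := cross_mem hα hβ hLL hV hV' hne hfPV'
  have hsingle : psiBlock β V ∩ psiBlock β V' = {fmin V} := by
    ext y
    simp only [mem_inter, mem_singleton]
    constructor
    · rintro ⟨hy1, hy2⟩
      rcases psiBlock_inter_cases hα hβ hLL hV hV' hne hy1 hy2 with ⟨h, -⟩ | ⟨-, h⟩
      · exact h
      · omega
    · rintro rfl
      exact ⟨hint.1, hint.2⟩
  have hfmV : fmin (psiBlock β V) = fmin V := fmin_psiBlock_nonspecial hα hβ hLL hV hns
  have hcard2 : 2 ≤ (psiBlock β V).card := card2_nonspecial hα hβ hLL hV hns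
  have hcard2' : 2 ≤ (psiBlock β V').card := by
    by_cases hs' : fmax (blockOf β (fmin V')) ∈ V'
    · exact card2_special hα hβ hLL hV' hs' (hW ▸ W_nontrivial hα hβ hLL hV hV' hne hW)
    · exact card2_nonspecial hα hβ hLL hV' hs'
  have hfne : fmin (psiBlock β V) ≠ fmin (psiBlock β V') := by
    by_cases hs' : fmax (blockOf β (fmin V')) ∈ V'
    · rw [hfmV, fmin_psiBlock_special hα hβ hLL hV' hs', ← hW]
      have := fminW_lt_fminV hα hβ hLL hV hns
      omega
    · rw [hfmV, fmin_psiBlock_nonspecial hα hβ hLL hV' hs']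
      omega
  refine ⟨hcard2, hcard2', by rw [hsingle]; exact Finset.card_singleton _, hfne, ?_⟩
  intro x hx
  rw [hsingle, mem_singleton] at hx
  exact Or.inl (hx.trans hfmV.symm)

lemma psi_linked (hα : IsNCPartition n α) (hβ : IsNCPartition n β) (hLL : LL α β) :
    IsLinkedPartitionOfSet (Finset.Icc 1 n) (psi α β) := by
  refine ⟨?_, ?_, ?_, ?_⟩
  · intro A hA
    obtain ⟨V, hV, rfl⟩ := mem_image.mp hA
    exact psiBlock_nonempty hα hV
  · intro A hA
    obtain ⟨V, hV, rfl⟩ := mem_image.mp hA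
    intro x hx
    exact hβ.1.2.1 _ (WV_spec hα hβ hLL hV).1 (psiBlock_subset hα hβ hLL hV hx)
  · -- cover
    intro m hm
    obtain ⟨W, hW, hmW⟩ := hβ.1.2.2.1 m hm
    have hp : prevInBlock W m ∈ W := prevInBlock_mem hmW
    obtain ⟨V, hV, hpV⟩ := hα.1.2.2.1 _ (hβ.1.2.1 W hW hp)
    refine ⟨psiBlock β V, mem_image.mpr ⟨V, hV, rfl⟩, ?_⟩
    refine PV_subset_psiBlock (mem_image.mpr ⟨prevInBlock W m, hpV, ?_⟩)
    rw [permOf_eq hβ.1 hW hp]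
    exact nextInBlock_prevInBlock hmW
  · -- pairwise linked condition
    intro A hA B hB hne
    obtain ⟨V, hV, rfl⟩ := mem_image.mp hA
    obtain ⟨V', hV', rfl⟩ := mem_image.mp hB
    have hVV' : V ≠ V' := fun e => hne (e ▸ rfl)
    by_cases hW : blockOf β (fmin V) = blockOf β (fmin V')
    · by_cases hint : psiBlock β V ∩ psiBlock β V' = ∅
      · exact Or.inl hint
      · right
        obtain ⟨x, hx⟩ := Finset.nonempty_iff_ne_empty.mpr hint
        have hx' := mem_inter.mp hx
        rcases psiBlock_inter_cases hα hβ hLL hV hV' hVV' hx'.1 hx'.2 with ⟨rfl, -⟩ | ⟨rfl, -⟩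
        · obtain ⟨c1, c2, c3, c4, c5⟩ := psiBlock_pair hα hβ hLL hV hV' hVV' hW hx
          exact ⟨c1, c2, c3, c4, c5⟩
        · obtain ⟨c1, c2, c3, c4, c5⟩ :=
            psiBlock_pair hα hβ hLL hV' hV hVV'.symm hW.symm
              (mem_inter.mpr ⟨hx'.2, hx'.1⟩)
          refine ⟨c2, c1, ?_, c4.symm, ?_⟩
          · rw [inter_comm]; exact c3
          · intro y hy
            rcases c5 y (mem_inter.mpr ⟨(mem_inter.mp hy).2, (mem_inter.mp hy).1⟩) with
              h | h
            · exact Or.inr h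
            · exact Or.inl h
    · left
      rw [Finset.eq_empty_iff_forall_notMem]
      intro x hx
      rw [mem_inter] at hx
      exact hW (beta_disjoint hβ (WV_spec hα hβ hLL hV).1 (WV_spec hα hβ hLL hV').1
        (psiBlock_subset hα hβ hLL hV hx.1) (psiBlock_subset hα hβ hLL hV' hx.2))

/-- anchor: every point of a ψ-block other than `fmin W` has a representative in `V`
between its predecessor and itself. -/
lemma anchor (hα : IsNCPartition n α) (hβ : IsNCPartition n β) (hLL : LL α β)
    {V : Finset ℕ} (hV : V ∈ α) {x : ℕ} (hx : x ∈ psiBlock β V)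
    (hxne : x ≠ fmin (blockOf β (fmin V))) :
    ∃ t ∈ V, prevInBlock (blockOf β (fmin V)) x ≤ t ∧ t ≤ x := by
  obtain ⟨hWβ, hVW⟩ := WV_spec hα hβ hLL hV
  have hxW : x ∈ blockOf β (fmin V) := psiBlock_subset hα hβ hLL hV hx
  rcases mem_psiBlock_cases hx with h | ⟨hns, rfl⟩
  · obtain ⟨v, hv, he⟩ := mem_image.mp h
    have hvW : v ∈ blockOf β (fmin V) := hVW hv
    rw [permOf_eq hβ.1 hWβ hvW] at he
    have hprev : prevInBlock (blockOf β (fmin V)) x = v := by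
      have h0 := prevInBlock_nextInBlock hvW
      rw [he] at h0
      exact h0
    have hvmax : v ≠ fmax (blockOf β (fmin V)) := by
      intro e
      rw [e, nextInBlock_fmax] at he
      exact hxne he.symm
    have := lt_nextInBlock hvW hvmax
    rw [he] at this
    exact ⟨v, hv, le_of_eq hprev, le_of_lt this⟩
  · refine ⟨fmin V, fmin_mem (hα.1.1 V hV), ?_, le_refl _⟩
    exact le_of_lt (prevInBlock_lt hxW (fun e => hxne e))

lemma minW_forces_special (hα : IsNCPartition n α) (hβ : IsNCPartition n β) (hLL : LL α β)
    {V : Finset ℕ} (hV : V ∈ α) {x : ℕ} (hx : x ∈ psiBlock β V)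
    (he : x = fmin (blockOf β (fmin V))) : fmax (blockOf β (fmin V)) ∈ V := by
  obtain ⟨hWβ, hVW⟩ := WV_spec hα hβ hLL hV
  rcases mem_psiBlock_cases hx with h | ⟨hns, rfl⟩
  · obtain ⟨v, hv, hev⟩ := mem_image.mp h
    have hvW : v ∈ blockOf β (fmin V) := hVW hv
    rw [permOf_eq hβ.1 hWβ hvW] at hev
    by_cases hvmax : v = fmax (blockOf β (fmin V))
    · exact hvmax ▸ hv
    · exfalso
      have h1 := lt_nextInBlock hvW hvmax
      have h2 := fmin_le hvW
      rw [hev, he] at h1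
      omega
  · exfalso
    have := fminW_lt_fminV hα hβ hLL hV hns
    omega

lemma psi_noncross (hα : IsNCPartition n α) (hβ : IsNCPartition n β) (hLL : LL α β) :
    ¬ IsCrossing (psi α β) := by
  rintro ⟨A, hA, B, hB, hne, a, ha, b, hb, c, hc, d, hd, h1, h2, h3⟩
  obtain ⟨V, hV, rfl⟩ := mem_image.mp hA
  obtain ⟨V', hV', rfl⟩ := mem_image.mp hB
  have hVV' : V ≠ V' := fun e => hne (e ▸ rfl)
  obtain ⟨hWβ, hVW⟩ := WV_spec hα hβ hLL hV
  obtain ⟨hWβ', hVW'⟩ := WV_spec hα hβ hLL hV'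
  have haW : a ∈ blockOf β (fmin V) := psiBlock_subset hα hβ hLL hV ha
  have hcW : c ∈ blockOf β (fmin V) := psiBlock_subset hα hβ hLL hV hc
  have hbW : b ∈ blockOf β (fmin V') := psiBlock_subset hα hβ hLL hV' hb
  have hdW : d ∈ blockOf β (fmin V') := psiBlock_subset hα hβ hLL hV' hd
  by_cases hW : blockOf β (fmin V) = blockOf β (fmin V')
  · -- same β-block
    rw [← hW] at hbW hdW
    have hfa : fmin (blockOf β (fmin V)) ≤ a := fmin_le haW
    have hbne : b ≠ fmin (blockOf β (fmin V)) := by omega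
    have hcne : c ≠ fmin (blockOf β (fmin V)) := by omega
    have hdne : d ≠ fmin (blockOf β (fmin V)) := by omega
    obtain ⟨tb, htbV, htb1, htb2⟩ := anchor hα hβ hLL hV' hb (by rw [← hW]; exact hbne)
    obtain ⟨tc, htcV, htc1, htc2⟩ := anchor hα hβ hLL hV hc hcne
    obtain ⟨td, htdV, htd1, htd2⟩ := anchor hα hβ hLL hV' hd (by rw [← hW]; exact hdne)
    rw [← hW] at htb1 htd1
    -- chains
    have hbc : b ≤ prevInBlock (blockOf β (fmin V)) c := le_prevInBlock hbW h2
    have hcd : c ≤ prevInBlock (blockOf β (fmin V)) d := le_prevInBlock hcW h3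
    have htbc : tb < tc := by
      have h0 : tb ≤ tc := by omega
      rcases lt_or_eq_of_le h0 with h | h
      · exact h
      · exact absurd (alpha_disjoint hα hV' hV htbV (h ▸ htcV)) hVV'.symm
    have htcd : tc < td := by
      have h0 : tc ≤ td := by omega
      rcases lt_or_eq_of_le h0 with h | h
      · exact h
      · exact absurd (alpha_disjoint hα hV hV' htcV (h ▸ htdV)) hVV'
    by_cases haf : a = fmin (blockOf β (fmin V))
    · -- V is the special block; use fmax W as fourth point
      have hsp : fmax (blockOf β (fmin V)) ∈ V := minW_forces_special hα hβ hLL hV ha haf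
      have htdmax : td < fmax (blockOf β (fmin V)) := by
        have h4 : d ≤ fmax (blockOf β (fmin V)) := le_fmax hdW
        have h5 : td ≠ fmax (blockOf β (fmin V)) := by
          intro e
          exact hVV' (alpha_disjoint hα hV hV' hsp (e ▸ htdV))
        omega
      exact no_cross hα.2 hV' hV hVV'.symm htbV htcV htdV hsp htbc htcd htdmax
    · obtain ⟨ta, htaV, hta1, hta2⟩ := anchor hα hβ hLL hV ha haf
      have hab : a ≤ prevInBlock (blockOf β (fmin V)) b := le_prevInBlock haW h1
      have htab : ta < tb := by
        have h0 : ta ≤ tb := by omega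
        rcases lt_or_eq_of_le h0 with h | h
        · exact h
        · exact absurd (alpha_disjoint hα hV hV' htaV (h ▸ htbV)) hVV'
      exact no_cross hα.2 hV hV' hVV' htaV htbV htcV htdV htab htbc htcd
  · -- different β-blocks: crossing in β
    exact no_cross hβ.2 hWβ hWβ' (fun e => hW e) haW hbW hcW hdW h1 h2 h3

theorem psi_NCL (hα : IsNCPartition n α) (hβ : IsNCPartition n β) (hLL : LL α β) :
    IsNCL n (psi α β) := ⟨psi_linked hα hβ hLL, psi_noncross hα hβ hLL⟩

end PsiNCL

end NCLProof
namespace NCLProof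

open Finset

section PsiInv

variable {n : ℕ} {α β : Finset (Finset ℕ)}

/-- Every element of a β-block is ψ-connected to its minimum. -/
lemma psi_conn_to_min (hα : IsNCPartition n α) (hβ : IsNCPartition n β) (hLL : LL α β)
    {W : Finset ℕ} (hW : W ∈ β) :
    ∀ x, x ∈ W → Conn (psi α β) x (fmin W) := by
  intro x
  induction x using Nat.strong_induction_on with
  | _ x ih =>
    intro hx
    have hp : prevInBlock W x ∈ W := prevInBlock_mem hx
    obtain ⟨V, hV, hpV⟩ := hα.1.2.2.1 _ (hβ.1.2.1 W hW hp)
    have hblockp : blockOf β (prevInBlock W x) = W := blockOf_eq hβ.1 hW hp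
    have hxPV : x ∈ V.image (permOf β) := by
      refine mem_image.mpr ⟨prevInBlock W x, hpV, ?_⟩
      rw [permOf, hblockp, if_pos hp]
      exact nextInBlock_prevInBlock hx
    have hWV : blockOf β (fmin V) = W :=
      beta_disjoint hβ (WV_spec hα hβ hLL hV).1 hW ((WV_spec hα hβ hLL hV).2 hpV) hp
    have hpsiV : psiBlock β V ∈ psi α β := mem_image.mpr ⟨V, hV, rfl⟩
    have hxpsi : x ∈ psiBlock β V := PV_subset_psiBlock hxPV
    by_cases hs : fmax (blockOf β (fmin V)) ∈ V
    · have : fmin (blockOf β (fmin V)) ∈ V.image (permOf β) :=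
        fminW_mem_PV_special hα hβ hLL hV hs
      rw [hWV] at this
      exact conn_of_mem hpsiV hxpsi (PV_subset_psiBlock this)
    · have hfV : fmin V ∈ psiBlock β V := by
        rw [psiBlock_nonspecial hα hβ hLL hV hs]
        exact mem_insert_self _ _
      have hlt : fmin V < x := mem_PV_gt hα hβ hLL hV hs hxPV
      have hfVW : fmin V ∈ W := by
        rw [← hWV]
        exact (WV_spec hα hβ hLL hV).2 (fmin_mem (hα.1.1 V hV))
      exact conn_trans (conn_of_mem hpsiV hxpsi hfV) (ih (fmin V) hlt hfVW)

lemma psi_conn_in (hα : IsNCPartition n α) (hβ : IsNCPartition n β) (hLL : LL α β)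
    {W : Finset ℕ} (hW : W ∈ β) :
    ∀ x y, Conn (psi α β) x y → (x ∈ W ↔ y ∈ W) := by
  refine conn_invariant _ ?_
  intro A hA x hx y hy hxW
  obtain ⟨V, hV, rfl⟩ := mem_image.mp hA
  have h1 : W = blockOf β (fmin V) :=
    beta_disjoint hβ hW (WV_spec hα hβ hLL hV).1 hxW (psiBlock_subset hα hβ hLL hV hx)
  rw [h1]
  exact psiBlock_subset hα hβ hLL hV hy

lemma comp_psi_eq (hα : IsNCPartition n α) (hβ : IsNCPartition n β) (hLL : LL α β)
    {W : Finset ℕ} (hW : W ∈ β) {m : ℕ} (hm : m ∈ W) :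
    comp n (psi α β) m = W := by
  ext z
  rw [mem_comp]
  constructor
  · rintro ⟨hzI, hconn⟩
    exact (psi_conn_in hα hβ hLL hW m z hconn).mp hm
  · intro hz
    exact ⟨hβ.1.2.1 W hW hz, conn_trans (psi_conn_to_min hα hβ hLL hW m hm)
      (conn_symm (psi_conn_to_min hα hβ hLL hW z hz))⟩

theorem genPart_psi (hα : IsNCPartition n α) (hβ : IsNCPartition n β) (hLL : LL α β) :
    genPart (psi α β) = β := by
  have hψ := psi_NCL hα hβ hLL
  ext X
  rw [genPart_eq hψ]
  constructor
  · intro hX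
    obtain ⟨m, hm, rfl⟩ := mem_image.mp hX
    obtain ⟨W, hW, hmW⟩ := hβ.1.2.2.1 m hm
    rw [comp_psi_eq hα hβ hLL hW hmW]
    exact hW
  · intro hX
    obtain ⟨m, hm⟩ := hβ.1.1 X hX
    exact mem_image.mpr ⟨m, hβ.1.2.1 X hX hm, comp_psi_eq hα hβ hLL hX hm⟩

lemma psi_singly_special (hα : IsNCPartition n α) (hβ : IsNCPartition n β) (hLL : LL α β)
    {V : Finset ℕ} (hV : V ∈ α) (hs : fmax (blockOf β (fmin V)) ∈ V) :
    SinglyCovered (psi α β) (fmin (psiBlock β V)) := by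
  rw [fmin_psiBlock_special hα hβ hLL hV hs]
  have hfilter : (psi α β).filter (fun A => fmin (blockOf β (fmin V)) ∈ A) = {psiBlock β V} := by
    ext A'
    rw [mem_filter, mem_singleton]
    constructor
    · rintro ⟨hA', hmem⟩
      obtain ⟨V'', hV'', rfl⟩ := mem_image.mp hA'
      have hWeq : blockOf β (fmin V) = blockOf β (fmin V'') := by
        refine beta_disjoint hβ (WV_spec hα hβ hLL hV).1 (WV_spec hα hβ hLL hV'').1 ?_
          (psiBlock_subset hα hβ hLL hV'' hmem)
        exact fmin_mem ⟨fmax _, hs⟩ |> fun h => (WV_spec hα hβ hLL hV).2 ((special_iff hα hβ hLL hV).mp hs)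
      have hspec : fmax (blockOf β (fmin V'')) ∈ V'' :=
        minW_forces_special hα hβ hLL hV'' hmem (by rw [← hWeq])
      have : V'' = V := alpha_disjoint hα hV'' hV hspec (by rw [← hWeq]; exact hs)
      rw [this]
    · rintro rfl
      refine ⟨mem_image.mpr ⟨V, hV, rfl⟩, ?_⟩
      exact PV_subset_psiBlock (fminW_mem_PV_special hα hβ hLL hV hs)
  unfold SinglyCovered coverCount
  rw [hfilter]
  exact Finset.card_singleton _

lemma psi_doubly_nonspecial (hα : IsNCPartition n α) (hβ : IsNCPartition n β) (hLL : LL α β)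
    {V : Finset ℕ} (hV : V ∈ α) (hns : fmax (blockOf β (fmin V)) ∉ V) :
    ¬ SinglyCovered (psi α β) (fmin (psiBlock β V)) := by
  rw [fmin_psiBlock_nonspecial hα hβ hLL hV hns]
  obtain ⟨hWβ, hVW⟩ := WV_spec hα hβ hLL hV
  have hfVW : fmin V ∈ blockOf β (fmin V) := hVW (fmin_mem (hα.1.1 V hV))
  have hfne : fmin V ≠ fmin (blockOf β (fmin V)) := by
    have := fminW_lt_fminV hα hβ hLL hV hns
    omega
  have hp : prevInBlock (blockOf β (fmin V)) (fmin V) ∈ blockOf β (fmin V) :=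
    prevInBlock_mem hfVW
  have hplt : prevInBlock (blockOf β (fmin V)) (fmin V) < fmin V :=
    prevInBlock_lt hfVW hfne
  obtain ⟨V'', hV'', hpV''⟩ := hα.1.2.2.1 _ (hβ.1.2.1 _ hWβ hp)
  have hVne : V'' ≠ V := by
    intro e
    have := fmin_le (e ▸ hpV'')
    omega
  have hmem1 : fmin V ∈ psiBlock β V := by
    rw [psiBlock_nonspecial hα hβ hLL hV hns]
    exact mem_insert_self _ _
  have hmem2 : fmin V ∈ psiBlock β V'' := by
    refine PV_subset_psiBlock (mem_image.mpr ⟨_, hpV'', ?_⟩)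
    rw [permOf, blockOf_eq hβ.1 hWβ hp, if_pos hp]
    exact nextInBlock_prevInBlock hfVW
  have hWeq : blockOf β (fmin V'') = blockOf β (fmin V) :=
    beta_disjoint hβ (WV_spec hα hβ hLL hV'').1 hWβ ((WV_spec hα hβ hLL hV'').2 hpV'') hp
  have hblockne : psiBlock β V ≠ psiBlock β V'' := by
    intro e
    have h1 : fmin (psiBlock β V) = fmin V := fmin_psiBlock_nonspecial hα hβ hLL hV hns
    by_cases hs'' : fmax (blockOf β (fmin V'')) ∈ V''
    · have h2 := fmin_psiBlock_special hα hβ hLL hV'' hs''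
      rw [← e, h1, hWeq] at h2
      have := fminW_lt_fminV hα hβ hLL hV hns
      omega
    · have h2 := fmin_psiBlock_nonspecial hα hβ hLL hV'' hs''
      rw [← e, h1] at h2
      have := fmin_le hpV''
      omega
  intro hsing
  have h2 : 1 < ((psi α β).filter (fun A => fmin V ∈ A)).card := by
    refine Finset.one_lt_card.mpr ⟨psiBlock β V, ?_, psiBlock β V'', ?_, hblockne⟩
    · exact mem_filter.mpr ⟨mem_image.mpr ⟨V, hV, rfl⟩, hmem1⟩
    · exact mem_filter.mpr ⟨mem_image.mpr ⟨V'', hV'', rfl⟩, hmem2⟩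
  unfold SinglyCovered coverCount at hsing
  omega

lemma unlink_psi (hα : IsNCPartition n α) (hβ : IsNCPartition n β) (hLL : LL α β) :
    unlink (psi α β) = mapPart (permOf β) α := by
  rw [unlink, psi, Finset.image_image, mapPart]
  refine Finset.image_congr ?_
  intro V hV
  show (if SinglyCovered (psi α β) (fmin (psiBlock β V)) then psiBlock β V
    else (psiBlock β V).erase (fmin (psiBlock β V))) = V.image (permOf β)
  by_cases hs : fmax (blockOf β (fmin V)) ∈ V
  · rw [if_pos (psi_singly_special hα hβ hLL hV hs)]
    exact psiBlock_special hα hβ hLL hV hs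
  · rw [if_neg (psi_doubly_nonspecial hα hβ hLL hV hs),
      fmin_psiBlock_nonspecial hα hβ hLL hV hs,
      psiBlock_nonspecial hα hβ hLL hV hs]
    exact Finset.erase_insert (fminV_notin_PV hα hβ hLL hV hs)

theorem cycUnlink_psi (hα : IsNCPartition n α) (hβ : IsNCPartition n β) (hLL : LL α β) :
    cycUnlink (psi α β) = α := by
  rw [cycUnlink, genPart_psi hα hβ hLL, unlink_psi hα hβ hLL, mapPart, mapPart,
    Finset.image_image]
  refine Eq.trans (Finset.image_congr ?_) Finset.image_id
  intro V hV
  show (V.image (permOf β)).image (permOfInv β) = V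
  rw [Finset.image_image]
  refine Eq.trans (Finset.image_congr ?_) Finset.image_id
  intro v hv
  exact permOfInv_permOf hβ.1 (WV_spec hα hβ hLL hV).1 ((WV_spec hα hβ hLL hV).2 hv)

end PsiInv

end NCLProof
open NCLProof in
/-- For every positive integer `n`, the map `π ↦ (π°, π̂)` is a
bijection from `NCL(n)` onto `{(α, β) : α, β ∈ NC(n), α ≪ β}`. -/
theorem stmt0 (n : ℕ) (hn : 0 < n) :
    Set.BijOn (fun π => (cycUnlink π, genPart π))
      {π : Finset (Finset ℕ) | IsNCL n π}
      {p : Finset (Finset ℕ) × Finset (Finset ℕ) |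
        IsNCPartition n p.1 ∧ IsNCPartition n p.2 ∧ LL p.1 p.2} := by
  refine ⟨?_, ?_, ?_⟩
  · intro π hπ
    exact ⟨cycUnlink_NC hπ, genPart_NC hπ, cycUnlink_LL hπ⟩
  · intro π1 h1 π2 h2 heq
    have e1 : cycUnlink π1 = cycUnlink π2 := congrArg Prod.fst heq
    have e2 : genPart π1 = genPart π2 := congrArg Prod.snd heq
    calc π1 = psi (cycUnlink π1) (genPart π1) := (psi_f h1).symm
      _ = psi (cycUnlink π2) (genPart π2) := by rw [e1, e2]
      _ = π2 := psi_f h2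
  · intro p hp
    obtain ⟨hα, hβ, hLL⟩ := hp
    refine ⟨psi p.1 p.2, psi_NCL hα hβ hLL, ?_⟩
    show (cycUnlink (psi p.1 p.2), genPart (psi p.1 p.2)) = p
    rw [cycUnlink_psi hα hβ hLL, genPart_psi hα hβ hLL]
end

section
/- Let β be a partition in NC(n). Then the map α ↦ P_β^{-1} · α sends the set {α ∈ NC(n) : α ≤ β} into itself. -/
open scoped Classical

section Stmt1Aux

lemma fmin_mem {A : Finset ℕ} (h : A.Nonempty) : fmin A ∈ A := by
  have : sInf (A : Set ℕ) ∈ (A : Set ℕ) := Nat.sInf_mem (by exact_mod_cast h)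
  exact_mod_cast this

lemma fmin_le {A : Finset ℕ} {x : ℕ} (hx : x ∈ A) : fmin A ≤ x :=
  Nat.sInf_le (by exact_mod_cast hx)

lemma fmax_mem {A : Finset ℕ} (h : A.Nonempty) : fmax A ∈ A := by
  have : sSup (A : Set ℕ) ∈ (A : Set ℕ) :=
    Nat.sSup_mem (by exact_mod_cast h) A.bddAbove
  exact_mod_cast this

lemma le_fmax {A : Finset ℕ} {x : ℕ} (hx : x ∈ A) : x ≤ fmax A :=
  le_csSup A.bddAbove (by exact_mod_cast hx)

lemma fmin_eq {A : Finset ℕ} {m : ℕ} (hm : m ∈ A) (hlb : ∀ x ∈ A, m ≤ x) :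
    fmin A = m := by
  refine le_antisymm (fmin_le hm) (le_csInf ⟨m, by exact_mod_cast hm⟩ ?_)
  intro x hx
  exact hlb x (by exact_mod_cast hx)

lemma prev_mem {V : Finset ℕ} {m : ℕ} (hm : m ∈ V) : prevInBlock V m ∈ V := by
  unfold prevInBlock
  split
  · exact fmax_mem ⟨m, hm⟩
  · rename_i h
    have hlt : fmin V < m := lt_of_le_of_ne (fmin_le hm) (fun e => h e.symm)
    have hne : (V.filter fun x => x < m).Nonempty :=
      ⟨fmin V, Finset.mem_filter.mpr ⟨fmin_mem ⟨m, hm⟩, hlt⟩⟩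
    exact (Finset.mem_filter.mp (fmax_mem hne)).1

lemma next_prev {V : Finset ℕ} {m : ℕ} (hm : m ∈ V) :
    nextInBlock V (prevInBlock V m) = m := by
  by_cases h : m = fmin V
  · rw [prevInBlock, if_pos h, nextInBlock, if_pos rfl, h]
  · have hlt : fmin V < m := lt_of_le_of_ne (fmin_le hm) (fun e => h e.symm)
    have hne : (V.filter fun x => x < m).Nonempty :=
      ⟨fmin V, Finset.mem_filter.mpr ⟨fmin_mem ⟨m, hm⟩, hlt⟩⟩
    have hpmem := Finset.mem_filter.mp (fmax_mem hne)
    rw [prevInBlock, if_neg h, nextInBlock, if_neg ?hne2]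
    case hne2 =>
      intro e
      have hle : m ≤ fmax V := le_fmax hm
      rw [← e] at hle
      exact absurd hpmem.2 (not_lt.mpr hle)
    · refine fmin_eq (Finset.mem_filter.mpr ⟨hm, hpmem.2⟩) ?_
      intro x hx
      have hx' := Finset.mem_filter.mp hx
      by_contra hxm
      push_neg at hxm
      have : x ≤ fmax (V.filter fun y => y < m) :=
        le_fmax (Finset.mem_filter.mpr ⟨hx'.1, hxm⟩)
      exact absurd hx'.2 (not_lt.mpr this)

lemma next_le {V : Finset ℕ} {x y : ℕ} (hy : y ∈ V) (hxy : x < y)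
    (hne : x ≠ fmax V) : nextInBlock V x ≤ y := by
  rw [nextInBlock, if_neg hne]
  exact fmin_le (Finset.mem_filter.mpr ⟨hy, hxy⟩)

lemma lt_next {V : Finset ℕ} {x : ℕ} (hx : x ∈ V) (hne : x ≠ fmax V) :
    x < nextInBlock V x := by
  rw [nextInBlock, if_neg hne]
  have hmax : x < fmax V := lt_of_le_of_ne (le_fmax hx) hne
  have hnonempty : (V.filter fun y => x < y).Nonempty :=
    ⟨fmax V, Finset.mem_filter.mpr ⟨fmax_mem ⟨x, hx⟩, hmax⟩⟩
  exact (Finset.mem_filter.mp (fmin_mem hnonempty)).2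

lemma blockOf_eq {β : Finset (Finset ℕ)} {W : Finset ℕ} {m : ℕ}
    (hd : ∀ V ∈ β, ∀ W' ∈ β, V ≠ W' → V ∩ W' = ∅)
    (hW : W ∈ β) (hm : m ∈ W) : blockOf β m = W := by
  have hfilter : β.filter (fun V => m ∈ V) = {W} := by
    ext V
    simp only [Finset.mem_filter, Finset.mem_singleton]
    constructor
    · rintro ⟨hV, hmV⟩
      by_contra hne
      have h1 := hd V hV W hW hne
      have h2 : m ∈ V ∩ W := Finset.mem_inter.mpr ⟨hmV, hm⟩
      rw [h1] at h2
      exact absurd h2 (Finset.notMem_empty m)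
    · rintro rfl; exact ⟨hW, hm⟩
  rw [blockOf, hfilter, Finset.sup_singleton, id]

lemma permOfInv_eq {β : Finset (Finset ℕ)} {W : Finset ℕ} {m : ℕ}
    (hd : ∀ V ∈ β, ∀ W' ∈ β, V ≠ W' → V ∩ W' = ∅)
    (hW : W ∈ β) (hm : m ∈ W) : permOfInv β m = prevInBlock W m := by
  rw [permOfInv, blockOf_eq hd hW hm, if_pos hm]

lemma permOfInv_mem {β : Finset (Finset ℕ)} {W : Finset ℕ} {m : ℕ}
    (hd : ∀ V ∈ β, ∀ W' ∈ β, V ≠ W' → V ∩ W' = ∅)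
    (hW : W ∈ β) (hm : m ∈ W) : permOfInv β m ∈ W := by
  rw [permOfInv_eq hd hW hm]; exact prev_mem hm

lemma next_permOfInv {β : Finset (Finset ℕ)} {W : Finset ℕ} {m : ℕ}
    (hd : ∀ V ∈ β, ∀ W' ∈ β, V ≠ W' → V ∩ W' = ∅)
    (hW : W ∈ β) (hm : m ∈ W) : nextInBlock W (permOfInv β m) = m := by
  rw [permOfInv_eq hd hW hm]; exact next_prev hm

lemma permOfInv_injOn {F : Finset ℕ} {β : Finset (Finset ℕ)}
    (hp : IsPartitionOfSet F β) :
    ∀ m₁ ∈ F, ∀ m₂ ∈ F, permOfInv β m₁ = permOfInv β m₂ → m₁ = m₂ := by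
  obtain ⟨-, -, hcov, hd⟩ := hp
  intro m₁ h₁ m₂ h₂ he
  obtain ⟨W₁, hW₁, hm₁⟩ := hcov m₁ h₁
  obtain ⟨W₂, hW₂, hm₂⟩ := hcov m₂ h₂
  by_cases hW : W₁ = W₂
  · subst hW
    rw [← next_permOfInv hd hW₁ hm₁, ← next_permOfInv hd hW₁ hm₂, he]
  · have p₁ : permOfInv β m₁ ∈ W₁ := permOfInv_mem hd hW₁ hm₁
    have p₂ : permOfInv β m₂ ∈ W₂ := permOfInv_mem hd hW₂ hm₂
    rw [he] at p₁
    have : permOfInv β m₂ ∈ W₁ ∩ W₂ := Finset.mem_inter.mpr ⟨p₁, p₂⟩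
    rw [hd W₁ hW₁ W₂ hW₂ hW] at this
    exact absurd this (Finset.notMem_empty _)

lemma image_permOfInv_block {F : Finset ℕ} {β : Finset (Finset ℕ)}
    (hp : IsPartitionOfSet F β) {W : Finset ℕ} (hW : W ∈ β) :
    W.image (permOfInv β) = W := by
  have hsub : W.image (permOfInv β) ⊆ W := by
    intro y hy
    obtain ⟨x, hx, rfl⟩ := Finset.mem_image.mp hy
    exact permOfInv_mem hp.2.2.2 hW hx
  refine (Finset.eq_of_subset_of_card_le hsub ?_).symm.symm
  rw [Finset.card_image_of_injOn]
  intro x hx y hy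
  exact permOfInv_injOn hp x (hp.2.1 W hW hx) y (hp.2.1 W hW hy)

end Stmt1Aux

/-- Let `β ∈ NC(n)`. Then the map `α ↦ P_β⁻¹ · α` sends the set
`{α ∈ NC(n) : α ≤ β}` into itself. -/
theorem stmt1 (n : ℕ) (β : Finset (Finset ℕ)) (hβ : IsNCPartition n β) :
    Set.MapsTo (fun α => mapPart (permOfInv β) α)
      {α : Finset (Finset ℕ) | IsNCPartition n α ∧ Refines α β}
      {α : Finset (Finset ℕ) | IsNCPartition n α ∧ Refines α β} := by
  rintro α ⟨⟨⟨hαne, hαsub, hαcov, hαdisj⟩, hαnc⟩, hαref⟩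
  obtain ⟨⟨hβne, hβsub, hβcov, hβdisj⟩, hβnc⟩ := hβ
  have hβp : IsPartitionOfSet (Finset.Icc 1 n) β := ⟨hβne, hβsub, hβcov, hβdisj⟩
  set τ := permOfInv β with hτ
  -- each block of α sits inside a block of β, and τ maps it inside that block
  have key : ∀ V ∈ α, ∃ W ∈ β, V ⊆ W ∧ V.image τ ⊆ W := by
    intro V hV
    obtain ⟨W, hW, hVW⟩ := hαref V hV
    refine ⟨W, hW, hVW, ?_⟩
    intro y hy
    obtain ⟨x, hx, rfl⟩ := Finset.mem_image.mp hy
    exact permOfInv_mem hβdisj hW (hVW hx)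
  simp only [Set.mem_setOf_eq]
  refine ⟨⟨⟨?_, ?_, ?_, ?_⟩, ?_⟩, ?_⟩
  · intro V' hV'
    obtain ⟨V, hV, rfl⟩ := Finset.mem_image.mp hV'
    exact (hαne V hV).image τ
  · intro V' hV'
    obtain ⟨V, hV, rfl⟩ := Finset.mem_image.mp hV'
    obtain ⟨W, hW, -, himg⟩ := key V hV
    exact himg.trans (hβsub W hW)
  · intro m hm
    obtain ⟨W, hW, hmW⟩ := hβcov m hm
    have : m ∈ W.image τ := by rw [image_permOfInv_block hβp hW]; exact hmW
    obtain ⟨x, hxW, hxm⟩ := Finset.mem_image.mp this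
    obtain ⟨V, hV, hxV⟩ := hαcov x (hβsub W hW hxW)
    exact ⟨V.image τ, Finset.mem_image_of_mem _ hV,
      hxm ▸ Finset.mem_image_of_mem τ hxV⟩
  · intro V' hV' W' hW' hne
    obtain ⟨V, hV, rfl⟩ := Finset.mem_image.mp hV'
    obtain ⟨W, hW, rfl⟩ := Finset.mem_image.mp hW'
    have hVW : V ≠ W := fun e => hne (by rw [e])
    rw [Finset.eq_empty_iff_forall_notMem]
    intro y hy
    obtain ⟨hy1, hy2⟩ := Finset.mem_inter.mp hy
    obtain ⟨x₁, hx₁, he₁⟩ := Finset.mem_image.mp hy1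
    obtain ⟨x₂, hx₂, he₂⟩ := Finset.mem_image.mp hy2
    have hx₁F : x₁ ∈ Finset.Icc 1 n := by
      obtain ⟨WV, hWV, hVWV, -⟩ := key V hV
      exact hβsub WV hWV (hVWV hx₁)
    have hx₂F : x₂ ∈ Finset.Icc 1 n := by
      obtain ⟨WW, hWW, hWWW, -⟩ := key W hW
      exact hβsub WW hWW (hWWW hx₂)
    have : x₁ = x₂ := permOfInv_injOn hβp x₁ hx₁F x₂ hx₂F (he₁.trans he₂.symm)
    subst this
    have hmem : x₁ ∈ V ∩ W := Finset.mem_inter.mpr ⟨hx₁, hx₂⟩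
    rw [hαdisj V hV W hW hVW] at hmem
    exact absurd hmem (Finset.notMem_empty _)
  · -- non-crossing
    rintro ⟨A', hA', B', hB', hAB', a', ha', b', hb', c', hc', d', hd', h1, h2, h3⟩
    obtain ⟨A, hA, rfl⟩ := Finset.mem_image.mp hA'
    obtain ⟨B, hB, rfl⟩ := Finset.mem_image.mp hB'
    have hABne : A ≠ B := fun e => hAB' (by rw [e])
    obtain ⟨WA, hWA, hAWA, hAimg⟩ := key A hA
    obtain ⟨WB, hWB, hBWB, hBimg⟩ := key B hB
    obtain ⟨a, haA, hae⟩ := Finset.mem_image.mp ha'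
    obtain ⟨b, hbB, hbe⟩ := Finset.mem_image.mp hb'
    obtain ⟨c, hcA, hce⟩ := Finset.mem_image.mp hc'
    obtain ⟨d, hdB, hde⟩ := Finset.mem_image.mp hd'
    have haW : a' ∈ WA := hAimg (hae ▸ Finset.mem_image_of_mem τ haA)
    have hcW : c' ∈ WA := hAimg (hce ▸ Finset.mem_image_of_mem τ hcA)
    have hbW : b' ∈ WB := hBimg (hbe ▸ Finset.mem_image_of_mem τ hbB)
    have hdW : d' ∈ WB := hBimg (hde ▸ Finset.mem_image_of_mem τ hdB)
    by_cases hWeq : WA = WB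
    · -- all four lie in a single block W of β; pull back along the cycle
      subst hWeq
      set W := WA
      have hna : nextInBlock W a' = a := by
        rw [← hae]; exact next_permOfInv hβdisj hWA (hAWA haA)
      have hnb : nextInBlock W b' = b := by
        rw [← hbe]; exact next_permOfInv hβdisj hWA (hBWB hbB)
      have hnc2 : nextInBlock W c' = c := by
        rw [← hce]; exact next_permOfInv hβdisj hWA (hAWA hcA)
      have hnd : nextInBlock W d' = d := by
        rw [← hde]; exact next_permOfInv hβdisj hWA (hBWB hdB)
      have hanotmax : a' ≠ fmax W := fun e =>
        absurd (le_fmax hbW) (by omega)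
      have hbnotmax : b' ≠ fmax W := fun e =>
        absurd (le_fmax hcW) (by omega)
      have hcnotmax : c' ≠ fmax W := fun e =>
        absurd (le_fmax hdW) (by omega)
      have hab : a < b := by
        have h₁ : nextInBlock W a' ≤ b' := next_le hbW h1 hanotmax
        have h₂ : b' < nextInBlock W b' := lt_next hbW hbnotmax
        omega
      have hbc : b < c := by
        have h₁ : nextInBlock W b' ≤ c' := next_le hcW h2 hbnotmax
        have h₂ : c' < nextInBlock W c' := lt_next hcW hcnotmax
        omega
      by_cases hdmax : d' = fmax W
      · -- d wraps around to the minimum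
        have hdmin : d = fmin W := by
          rw [← hnd, hdmax, nextInBlock, if_pos rfl]
        have hda : d < a := by
          have h₁ : fmin W ≤ a' := fmin_le haW
          have h₂ : a' < nextInBlock W a' := lt_next haW hanotmax
          omega
        exact hαnc ⟨B, hB, A, hA, hABne.symm, d, hdB, a, haA, b, hbB, c, hcA,
          hda, hab, hbc⟩
      · have hcd : c < d := by
          have h₁ : nextInBlock W c' ≤ d' := next_le hdW h3 hcnotmax
          have h₂ : d' < nextInBlock W d' := lt_next hdW hdmax
          omega
        exact hαnc ⟨A, hA, B, hB, hABne, a, haA, b, hbB, c, hcA, d, hdB,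
          hab, hbc, hcd⟩
    · -- the four points witness a crossing of β itself
      exact hβnc ⟨WA, hWA, WB, hWB, hWeq, a', haW, b', hbW, c', hcW, d', hdW,
        h1, h2, h3⟩
  · -- Refines
    intro V' hV'
    obtain ⟨V, hV, rfl⟩ := Finset.mem_image.mp hV'
    obtain ⟨W, hW, -, himg⟩ := key V hV
    exact ⟨W, hW, himg⟩
end
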